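/- arXiv:2012.05219 — 5 statements merged into one kernel-verified Lean document; each statement's English description precedes it below -/
import Mathlib

section
/- The inter-expectile difference Δ^ex_p is convex: for integrable X, Y, λ ∈ [0,1], and p in (1/2,1), Δ^ex_p(λX + (1-λ)Y) ≤ λ·Δ^ex_p(X) + (1-λ)·Δ^ex_p(Y). -/
open MeasureTheory Set

/-- The `p`-expectile of `X`, the unique solution `x` of
`p E[(X-x)_+] = (1-p) E[(X-x)_-]`. -/
noncomputable def expectile {Ω : Type*} [MeasurableSpace Ω] (μ : Measure Ω)
    (X : Ω → ℝ) (p : ℝ) : ℝ :=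
  sInf {x : ℝ | p * ∫ ω, max (X ω - x) 0 ∂μ ≤ (1 - p) * ∫ ω, max (x - X ω) 0 ∂μ}

/-- The inter-expectile difference `Δ^ex_p(X) = ex_p(X) - ex_{1-p}(X)`. -/
noncomputable def interExpectileDiff {Ω : Type*} [MeasurableSpace Ω] (μ : Measure Ω)
    (X : Ω → ℝ) (p : ℝ) : ℝ :=
  expectile μ X p - expectile μ X (1 - p)

section Aux

variable {Ω : Type*} [MeasurableSpace Ω] {μ : Measure Ω}

/-- The defining function of the expectile. -/
noncomputable def eG (μ : Measure Ω) (X : Ω → ℝ) (p x : ℝ) : ℝ :=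
  p * ∫ ω, max (X ω - x) 0 ∂μ - (1 - p) * ∫ ω, max (x - X ω) 0 ∂μ

lemma expectile_eq_sInf (X : Ω → ℝ) (p : ℝ) :
    expectile μ X p = sInf {x | eG μ X p x ≤ 0} := by
  unfold expectile eG
  congr 1
  ext x
  simp [Set.mem_setOf_eq, sub_nonpos]

lemma int_pos [IsFiniteMeasure μ] (X : Ω → ℝ) (hX : Integrable X μ) (x : ℝ) :
    Integrable (fun ω => max (X ω - x) 0) μ := (hX.sub (integrable_const x)).pos_part

lemma int_neg [IsFiniteMeasure μ] (X : Ω → ℝ) (hX : Integrable X μ) (x : ℝ) :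
    Integrable (fun ω => max (x - X ω) 0) μ := ((integrable_const x).sub hX).pos_part

lemma eG_sub_bounds [IsProbabilityMeasure μ] {X : Ω → ℝ} (hX : Integrable X μ)
    {p : ℝ} (hp0 : 0 ≤ p) (hp1 : p ≤ 1) {x y : ℝ} (hxy : x ≤ y) :
    min p (1 - p) * (y - x) ≤ eG μ X p x - eG μ X p y ∧
      eG μ X p x - eG μ X p y ≤ y - x := by
  have sp : ∀ t : ℝ, max t 0 - max (-t) 0 = t := by
    intro t
    rcases le_total t 0 with h | h
    · rw [max_eq_right h, max_eq_left (by linarith)]; ring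
    · rw [max_eq_left h, max_eq_right (by linarith)]; ring
  have key : ∀ a : ℝ,
      (max (a - x) 0 - max (a - y) 0) + (max (y - a) 0 - max (x - a) 0) = y - x := by
    intro a
    have h1 := sp (a - x); have h2 := sp (a - y)
    rw [neg_sub] at h1 h2
    linarith
  have hA : ∀ ω, 0 ≤ max (X ω - x) 0 - max (X ω - y) 0 := by
    intro ω
    have : X ω - y ≤ X ω - x := by linarith
    have := max_le_max this (le_refl (0 : ℝ))
    linarith
  have hB : ∀ ω, 0 ≤ max (y - X ω) 0 - max (x - X ω) 0 := by
    intro ω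
    have : x - X ω ≤ y - X ω := by linarith
    have := max_le_max this (le_refl (0 : ℝ))
    linarith
  have iA : Integrable (fun ω => max (X ω - x) 0 - max (X ω - y) 0) μ :=
    (int_pos X hX x).sub (int_pos X hX y)
  have iB : Integrable (fun ω => max (y - X ω) 0 - max (x - X ω) 0) μ :=
    (int_neg X hX y).sub (int_neg X hX x)
  have hIA : 0 ≤ ∫ ω, (max (X ω - x) 0 - max (X ω - y) 0) ∂μ :=
    integral_nonneg hA
  have hIB : 0 ≤ ∫ ω, (max (y - X ω) 0 - max (x - X ω) 0) ∂μ :=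
    integral_nonneg hB
  have hsum : (∫ ω, (max (X ω - x) 0 - max (X ω - y) 0) ∂μ)
      + (∫ ω, (max (y - X ω) 0 - max (x - X ω) 0) ∂μ) = y - x := by
    rw [← integral_add iA iB]
    simp_rw [key]
    simp
  have hd : eG μ X p x - eG μ X p y
      = p * (∫ ω, (max (X ω - x) 0 - max (X ω - y) 0) ∂μ)
        + (1 - p) * (∫ ω, (max (y - X ω) 0 - max (x - X ω) 0) ∂μ) := by
    unfold eG
    rw [integral_sub (int_pos X hX x) (int_pos X hX y),
        integral_sub (int_neg X hX y) (int_neg X hX x)]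
    ring
  constructor
  · rcases le_total p (1 - p) with h | h
    · rw [min_eq_left h]; nlinarith
    · rw [min_eq_right h]; nlinarith
  · nlinarith

lemma eG_cont [IsProbabilityMeasure μ] {X : Ω → ℝ} (hX : Integrable X μ)
    {p : ℝ} (hp0 : 0 ≤ p) (hp1 : p ≤ 1) : Continuous (eG μ X p) := by
  have hlip : LipschitzWith 1 (eG μ X p) := by
    apply LipschitzWith.of_dist_le_mul
    intro x y
    rw [NNReal.coe_one, one_mul, Real.dist_eq, Real.dist_eq]
    have hmin : 0 ≤ min p (1 - p) := le_min hp0 (by linarith)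
    rcases le_total x y with h | h
    · obtain ⟨h1, h2⟩ := eG_sub_bounds hX hp0 hp1 h
      have h0 : 0 ≤ eG μ X p x - eG μ X p y := le_trans (by nlinarith) h1
      rw [abs_of_nonneg h0, abs_of_nonpos (by linarith)]
      linarith
    · obtain ⟨h1, h2⟩ := eG_sub_bounds hX hp0 hp1 h
      have h0 : 0 ≤ eG μ X p y - eG μ X p x := le_trans (by nlinarith) h1
      rw [abs_of_nonpos (by linarith), abs_of_nonneg (by linarith)]
      linarith
  exact hlip.continuous

lemma eG_set_nonempty [IsProbabilityMeasure μ] {X : Ω → ℝ} (hX : Integrable X μ)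
    {p : ℝ} (hp0 : 0 < p) (hp1 : p < 1) : {x | eG μ X p x ≤ 0}.Nonempty := by
  set c := min p (1 - p) with hc
  have hcpos : 0 < c := lt_min hp0 (by linarith)
  refine ⟨max (eG μ X p 0 / c) 0, ?_⟩
  have hx0 : (0 : ℝ) ≤ max (eG μ X p 0 / c) 0 := le_max_right _ _
  have h1 := (eG_sub_bounds hX hp0.le hp1.le hx0).1
  have hx1 : eG μ X p 0 / c ≤ max (eG μ X p 0 / c) 0 := le_max_left _ _
  rw [div_le_iff₀ hcpos] at hx1
  simp only [Set.mem_setOf_eq]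
  nlinarith [mul_comm c (max (eG μ X p 0 / c) 0)]

lemma eG_set_bddBelow [IsProbabilityMeasure μ] {X : Ω → ℝ} (hX : Integrable X μ)
    {p : ℝ} (hp0 : 0 < p) (hp1 : p < 1) : BddBelow {x | eG μ X p x ≤ 0} := by
  set c := min p (1 - p) with hc
  have hcpos : 0 < c := lt_min hp0 (by linarith)
  refine ⟨min (eG μ X p 0 / c) 0, ?_⟩
  intro y hy
  simp only [Set.mem_setOf_eq] at hy
  rcases le_total 0 y with h | h
  · exact le_trans (min_le_right _ _) h
  · have h1 := (eG_sub_bounds hX hp0.le hp1.le h).1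
    have h2 : eG μ X p 0 / c ≤ y := by
      rw [div_le_iff₀ hcpos]
      nlinarith [mul_comm c y]
    exact le_trans (min_le_left _ _) h2

lemma eG_expectile_nonpos [IsProbabilityMeasure μ] {X : Ω → ℝ} (hX : Integrable X μ)
    {p : ℝ} (hp0 : 0 < p) (hp1 : p < 1) : eG μ X p (expectile μ X p) ≤ 0 := by
  rw [expectile_eq_sInf]
  have hclosed : IsClosed {x | eG μ X p x ≤ 0} :=
    isClosed_le (eG_cont hX hp0.le hp1.le) continuous_const
  exact hclosed.csInf_mem (eG_set_nonempty hX hp0 hp1) (eG_set_bddBelow hX hp0 hp1)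

lemma eG_expectile_nonneg [IsProbabilityMeasure μ] {X : Ω → ℝ} (hX : Integrable X μ)
    {p : ℝ} (hp0 : 0 < p) (hp1 : p < 1) : 0 ≤ eG μ X p (expectile μ X p) := by
  by_contra h
  push_neg at h
  set e := expectile μ X p with he
  set x := e + eG μ X p e / 2 with hx
  have hxe : x ≤ e := by rw [hx]; linarith
  have hb := (eG_sub_bounds hX hp0.le hp1.le hxe).2
  have hmem : x ∈ {z | eG μ X p z ≤ 0} := by
    simp only [Set.mem_setOf_eq]
    rw [hx] at hb ⊢
    linarith
  have : e ≤ x := by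
    rw [he, expectile_eq_sInf]
    exact csInf_le (eG_set_bddBelow hX hp0 hp1) hmem
  rw [hx] at this
  linarith

lemma expectile_le_of_nonpos [IsProbabilityMeasure μ] {X : Ω → ℝ} (hX : Integrable X μ)
    {p : ℝ} (hp0 : 0 < p) (hp1 : p < 1) {z : ℝ} (hz : eG μ X p z ≤ 0) :
    expectile μ X p ≤ z := by
  rw [expectile_eq_sInf]
  exact csInf_le (eG_set_bddBelow hX hp0 hp1) hz

lemma le_expectile_of_nonneg [IsProbabilityMeasure μ] {X : Ω → ℝ} (hX : Integrable X μ)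
    {p : ℝ} (hp0 : 0 < p) (hp1 : p < 1) {z : ℝ} (hz : 0 ≤ eG μ X p z) :
    z ≤ expectile μ X p := by
  rw [expectile_eq_sInf]
  apply le_csInf (eG_set_nonempty hX hp0 hp1)
  intro y hy
  simp only [Set.mem_setOf_eq] at hy
  by_contra hlt
  push_neg at hlt
  have hb := (eG_sub_bounds hX hp0.le hp1.le hlt.le).1
  have hcpos : 0 < min p (1 - p) := lt_min hp0 (by linarith)
  nlinarith

/-- The pointwise loss function. -/
noncomputable def hfun (p t : ℝ) : ℝ := p * max t 0 - (1 - p) * max (-t) 0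

lemma hfun_integrable [IsFiniteMeasure μ] {X : Ω → ℝ} (hX : Integrable X μ) (p a : ℝ) :
    Integrable (fun ω => hfun p (X ω - a)) μ := by
  unfold hfun
  simp_rw [neg_sub]
  exact ((int_pos X hX a).const_mul p).sub ((int_neg X hX a).const_mul (1 - p))

lemma eG_eq_integral [IsFiniteMeasure μ] (X : Ω → ℝ) (hX : Integrable X μ) (p x : ℝ) :
    eG μ X p x = ∫ ω, hfun p (X ω - x) ∂μ := by
  unfold eG hfun
  simp_rw [neg_sub]
  rw [integral_sub ((int_pos X hX x).const_mul p) ((int_neg X hX x).const_mul (1 - p)),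
      integral_const_mul, integral_const_mul]

lemma hfun_eq_max {p : ℝ} (hp : 1 / 2 ≤ p) (t : ℝ) :
    hfun p t = max (p * t) ((1 - p) * t) := by
  unfold hfun
  rcases le_total t 0 with h | h
  · rw [max_eq_right h, max_eq_left (by linarith), max_eq_right (by nlinarith)]
    ring
  · rw [max_eq_left h, max_eq_right (by linarith), max_eq_left (by nlinarith)]
    ring

lemma hfun_convex {p : ℝ} (hp : 1 / 2 ≤ p) {l : ℝ} (hl0 : 0 ≤ l) (hl1 : l ≤ 1) (u v : ℝ) :
    hfun p (l * u + (1 - l) * v) ≤ l * hfun p u + (1 - l) * hfun p v := by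
  rw [hfun_eq_max hp, hfun_eq_max hp, hfun_eq_max hp]
  apply max_le
  · nlinarith [le_max_left (p * u) ((1 - p) * u), le_max_left (p * v) ((1 - p) * v)]
  · nlinarith [le_max_right (p * u) ((1 - p) * u), le_max_right (p * v) ((1 - p) * v)]

lemma hfun_concave {p : ℝ} (hp : p ≤ 1 / 2) {l : ℝ} (hl0 : 0 ≤ l) (hl1 : l ≤ 1) (u v : ℝ) :
    l * hfun p u + (1 - l) * hfun p v ≤ hfun p (l * u + (1 - l) * v) := by
  have key : ∀ t : ℝ, hfun p t = -hfun (1 - p) (-t) := by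
    intro t
    unfold hfun
    rw [neg_neg]
    ring
  have h := hfun_convex (p := 1 - p) (by linarith) hl0 hl1 (-u) (-v)
  have h2 : l * -u + (1 - l) * -v = -(l * u + (1 - l) * v) := by ring
  rw [h2] at h
  rw [key u, key v, key (l * u + (1 - l) * v)]
  linarith

lemma expectile_combo_le [IsProbabilityMeasure μ] {X Y : Ω → ℝ}
    (hX : Integrable X μ) (hY : Integrable Y μ)
    {l : ℝ} (hl0 : 0 ≤ l) (hl1 : l ≤ 1) {p : ℝ} (hp : 1 / 2 ≤ p) (hp1 : p < 1) :
    expectile μ (fun ω => l * X ω + (1 - l) * Y ω) p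
      ≤ l * expectile μ X p + (1 - l) * expectile μ Y p := by
  have hp0 : 0 < p := by linarith
  set a := expectile μ X p with ha
  set b := expectile μ Y p with hb
  have hZint : Integrable (fun ω => l * X ω + (1 - l) * Y ω) μ :=
    (hX.const_mul l).add (hY.const_mul (1 - l))
  apply expectile_le_of_nonpos hZint hp0 hp1
  rw [eG_eq_integral _ hZint]
  have hA := eG_expectile_nonpos hX hp0 hp1
  have hB := eG_expectile_nonpos hY hp0 hp1
  rw [eG_eq_integral _ hX] at hA
  rw [eG_eq_integral _ hY] at hB
  have hpt : ∀ ω, hfun p (l * X ω + (1 - l) * Y ω - (l * a + (1 - l) * b))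
      ≤ l * hfun p (X ω - a) + (1 - l) * hfun p (Y ω - b) := by
    intro ω
    have h := hfun_convex hp hl0 hl1 (X ω - a) (Y ω - b)
    have heq : l * X ω + (1 - l) * Y ω - (l * a + (1 - l) * b)
        = l * (X ω - a) + (1 - l) * (Y ω - b) := by ring
    rw [heq]
    exact h
  have hint1 := hfun_integrable hX p a
  have hint2 := hfun_integrable hY p b
  calc (∫ ω, hfun p (l * X ω + (1 - l) * Y ω - (l * a + (1 - l) * b)) ∂μ)
      ≤ ∫ ω, (l * hfun p (X ω - a) + (1 - l) * hfun p (Y ω - b)) ∂μ :=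
        integral_mono (hfun_integrable hZint p _)
          ((hint1.const_mul l).add (hint2.const_mul (1 - l))) hpt
    _ = l * (∫ ω, hfun p (X ω - a) ∂μ) + (1 - l) * ∫ ω, hfun p (Y ω - b) ∂μ := by
        rw [integral_add (hint1.const_mul l) (hint2.const_mul (1 - l)),
          integral_const_mul, integral_const_mul]
    _ ≤ 0 := by nlinarith

lemma expectile_combo_ge [IsProbabilityMeasure μ] {X Y : Ω → ℝ}
    (hX : Integrable X μ) (hY : Integrable Y μ)
    {l : ℝ} (hl0 : 0 ≤ l) (hl1 : l ≤ 1) {p : ℝ} (hp : p ≤ 1 / 2) (hp0 : 0 < p) :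
    l * expectile μ X p + (1 - l) * expectile μ Y p
      ≤ expectile μ (fun ω => l * X ω + (1 - l) * Y ω) p := by
  have hp1 : p < 1 := by linarith
  set a := expectile μ X p with ha
  set b := expectile μ Y p with hb
  have hZint : Integrable (fun ω => l * X ω + (1 - l) * Y ω) μ :=
    (hX.const_mul l).add (hY.const_mul (1 - l))
  apply le_expectile_of_nonneg hZint hp0 hp1
  rw [eG_eq_integral _ hZint]
  have hA := eG_expectile_nonneg hX hp0 hp1
  have hB := eG_expectile_nonneg hY hp0 hp1
  rw [eG_eq_integral _ hX] at hA
  rw [eG_eq_integral _ hY] at hB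
  have hpt : ∀ ω, l * hfun p (X ω - a) + (1 - l) * hfun p (Y ω - b)
      ≤ hfun p (l * X ω + (1 - l) * Y ω - (l * a + (1 - l) * b)) := by
    intro ω
    have h := hfun_concave hp hl0 hl1 (X ω - a) (Y ω - b)
    have heq : l * X ω + (1 - l) * Y ω - (l * a + (1 - l) * b)
        = l * (X ω - a) + (1 - l) * (Y ω - b) := by ring
    rw [heq]
    exact h
  have hint1 := hfun_integrable hX p a
  have hint2 := hfun_integrable hY p b
  calc (0 : ℝ)
      ≤ l * (∫ ω, hfun p (X ω - a) ∂μ) + (1 - l) * ∫ ω, hfun p (Y ω - b) ∂μ := by nlinarith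
    _ = ∫ ω, (l * hfun p (X ω - a) + (1 - l) * hfun p (Y ω - b)) ∂μ := by
        rw [integral_add (hint1.const_mul l) (hint2.const_mul (1 - l)),
          integral_const_mul, integral_const_mul]
    _ ≤ ∫ ω, hfun p (l * X ω + (1 - l) * Y ω - (l * a + (1 - l) * b)) ∂μ :=
        integral_mono ((hint1.const_mul l).add (hint2.const_mul (1 - l)))
          (hfun_integrable hZint p _) hpt

end Aux

/-- `Δ^ex_p` is convex: for integrable `X, Y`, `λ ∈ [0,1]` and `p ∈ (1/2,1)`,
`Δ^ex_p(λX + (1-λ)Y) ≤ λ Δ^ex_p(X) + (1-λ) Δ^ex_p(Y)`. -/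
theorem interExpectileDiff_convex {Ω : Type*} [MeasurableSpace Ω] (μ : Measure Ω)
    [IsProbabilityMeasure μ] (X Y : Ω → ℝ) (hXm : Measurable X) (hYm : Measurable Y)
    (hX : Integrable X μ) (hY : Integrable Y μ)
    (l : ℝ) (hl : l ∈ Icc (0:ℝ) 1) (p : ℝ) (hp : p ∈ Ioo (1/2 : ℝ) 1) :
    interExpectileDiff μ (fun ω => l * X ω + (1 - l) * Y ω) p
      ≤ l * interExpectileDiff μ X p + (1 - l) * interExpectileDiff μ Y p := by
  obtain ⟨hl0, hl1⟩ := hl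
  obtain ⟨hp2, hp1⟩ := hp
  have h1 := expectile_combo_le hX hY hl0 hl1 (p := p) hp2.le hp1
  have h2 := expectile_combo_ge hX hY hl0 hl1 (p := 1 - p) (by linarith) (by linarith)
  unfold interExpectileDiff
  linarith
end

section
/- If X has a symmetric distribution (X equal in law to −X), then for p in (1/2,1): Δ^Q_p(X) = −2·Q^-_{1-p}(X), Δ^ES_p(X) = −2·ES^-_{1-p}(X), and Δ^ex_p(X) = 2·ex_p(X). -/
open MeasureTheory Set

/-- The right-quantile `Q_p(X) = inf {x | P(X ≤ x) > p}`. -/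
noncomputable def rightQuantile {Ω : Type*} [MeasurableSpace Ω] (μ : Measure Ω)
    (X : Ω → ℝ) (p : ℝ) : ℝ :=
  sInf {x : ℝ | p < (μ {ω | X ω ≤ x}).toReal}

/-- The left-quantile `Q^-_p(X) = inf {x | P(X ≤ x) ≥ p}`. -/
noncomputable def leftQuantile {Ω : Type*} [MeasurableSpace Ω] (μ : Measure Ω)
    (X : Ω → ℝ) (p : ℝ) : ℝ :=
  sInf {x : ℝ | p ≤ (μ {ω | X ω ≤ x}).toReal}

/-- The Expected Shortfall `ES_p(X) = (1/(1-p)) ∫_p^1 Q_r(X) dr`. -/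
noncomputable def es {Ω : Type*} [MeasurableSpace Ω] (μ : Measure Ω)
    (X : Ω → ℝ) (p : ℝ) : ℝ :=
  (1 - p)⁻¹ * ∫ r in p..1, rightQuantile μ X r

/-- The left Expected Shortfall `ES^-_p(X) = (1/p) ∫_0^p Q_r(X) dr`. -/
noncomputable def esm {Ω : Type*} [MeasurableSpace Ω] (μ : Measure Ω)
    (X : Ω → ℝ) (p : ℝ) : ℝ :=
  p⁻¹ * ∫ r in (0:ℝ)..p, rightQuantile μ X r

open Filter Topology

section helper

variable {Ω : Type*} [MeasurableSpace Ω] (μ : Measure Ω) [IsProbabilityMeasure μ]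
  (X : Ω → ℝ)

lemma cdf_mono {x y : ℝ} (hxy : x ≤ y) :
    (μ {ω | X ω ≤ x}).toReal ≤ (μ {ω | X ω ≤ y}).toReal :=
  ENNReal.toReal_mono (measure_ne_top _ _)
    (measure_mono fun ω hω => le_trans hω hxy)

lemma cdf_lt_mono {x y : ℝ} (hxy : x < y) :
    (μ {ω | X ω ≤ x}).toReal ≤ (μ {ω | X ω < y}).toReal :=
  ENNReal.toReal_mono (measure_ne_top _ _)
    (measure_mono fun ω hω => lt_of_le_of_lt hω hxy)

lemma cdfs_le (x : ℝ) :
    (μ {ω | X ω < x}).toReal ≤ (μ {ω | X ω ≤ x}).toReal :=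
  ENNReal.toReal_mono (measure_ne_top _ _)
    (measure_mono fun ω hω => le_of_lt (show X ω < x from hω))

lemma cdfs_mono {x y : ℝ} (hxy : x ≤ y) :
    (μ {ω | X ω < x}).toReal ≤ (μ {ω | X ω < y}).toReal :=
  ENNReal.toReal_mono (measure_ne_top _ _)
    (measure_mono fun ω hω => lt_of_lt_of_le hω hxy)

lemma exists_cdf_gt {r : ℝ} (hr : r < 1) :
    ∃ x : ℝ, r < (μ {ω | X ω ≤ x}).toReal := by
  have hm : Monotone fun n : ℕ => {ω | X ω ≤ (n : ℝ)} := by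
    intro m n hmn ω hω
    have h1 : X ω ≤ (m : ℝ) := hω
    show X ω ≤ (n : ℝ)
    exact le_trans h1 (Nat.cast_le.2 hmn)
  have hU : ⋃ n : ℕ, {ω | X ω ≤ (n : ℝ)} = univ := by
    ext ω
    simp only [mem_iUnion, mem_setOf_eq, mem_univ, iff_true]
    exact exists_nat_ge (X ω)
  have h1 := tendsto_measure_iUnion_atTop (μ := μ) hm
  rw [hU, measure_univ] at h1
  have h2 : Tendsto (fun n : ℕ => (μ {ω | X ω ≤ (n : ℝ)}).toReal) atTop (𝓝 1) := by
    have := (ENNReal.tendsto_toReal ENNReal.one_ne_top).comp h1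
    simpa [Function.comp_def] using this
  obtain ⟨n, hn⟩ := (h2.eventually (eventually_gt_nhds hr)).exists
  exact ⟨n, hn⟩

lemma exists_cdfs_gt {r : ℝ} (hr : r < 1) :
    ∃ x : ℝ, r < (μ {ω | X ω < x}).toReal := by
  have hm : Monotone fun n : ℕ => {ω | X ω < (n : ℝ)} := by
    intro m n hmn ω hω
    have h1 : X ω < (m : ℝ) := hω
    show X ω < (n : ℝ)
    exact lt_of_lt_of_le h1 (Nat.cast_le.2 hmn)
  have hU : ⋃ n : ℕ, {ω | X ω < (n : ℝ)} = univ := by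
    ext ω
    simp only [mem_iUnion, mem_setOf_eq, mem_univ, iff_true]
    exact exists_nat_gt (X ω)
  have h1 := tendsto_measure_iUnion_atTop (μ := μ) hm
  rw [hU, measure_univ] at h1
  have h2 : Tendsto (fun n : ℕ => (μ {ω | X ω < (n : ℝ)}).toReal) atTop (𝓝 1) := by
    have := (ENNReal.tendsto_toReal ENNReal.one_ne_top).comp h1
    simpa [Function.comp_def] using this
  obtain ⟨n, hn⟩ := (h2.eventually (eventually_gt_nhds hr)).exists
  exact ⟨n, hn⟩

lemma exists_cdf_lt (hXm : Measurable X) {r : ℝ} (hr : 0 < r) :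
    ∃ x : ℝ, (μ {ω | X ω ≤ x}).toReal < r := by
  have hm : Antitone fun n : ℕ => {ω | X ω ≤ -(n : ℝ)} := by
    intro m n hmn ω hω
    have h1 : X ω ≤ -(n : ℝ) := hω
    have h2 : (m : ℝ) ≤ (n : ℝ) := Nat.cast_le.2 hmn
    show X ω ≤ -(m : ℝ)
    linarith
  have hI : ⋂ n : ℕ, {ω | X ω ≤ -(n : ℝ)} = (∅ : Set Ω) := by
    ext ω
    simp only [mem_iInter, mem_setOf_eq, mem_empty_iff_false, iff_false, not_forall, not_le]
    obtain ⟨n, hn⟩ := exists_nat_gt (-X ω)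
    exact ⟨n, by linarith⟩
  have h1 := tendsto_measure_iInter_atTop (μ := μ)
    (s := fun n : ℕ => {ω | X ω ≤ -(n : ℝ)})
    (fun n : ℕ => (hXm measurableSet_Iic).nullMeasurableSet) hm ⟨0, measure_ne_top _ _⟩
  rw [hI, measure_empty] at h1
  have h2 : Tendsto (fun n : ℕ => (μ {ω | X ω ≤ -(n : ℝ)}).toReal) atTop (𝓝 0) := by
    have := (ENNReal.tendsto_toReal ENNReal.zero_ne_top).comp h1
    simpa [Function.comp_def] using this
  obtain ⟨n, hn⟩ := (h2.eventually (eventually_lt_nhds hr)).exists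
  exact ⟨-(n : ℝ), hn⟩

lemma sym_cdf (hXm : Measurable X)
    (hsym : Measure.map X μ = Measure.map (fun ω => -X ω) μ) (x : ℝ) :
    (μ {ω | X ω ≤ -x}).toReal = 1 - (μ {ω | X ω < x}).toReal := by
  have h0 := congrArg (fun ν : Measure ℝ => ν (Iic (-x))) hsym
  simp only [Measure.map_apply hXm measurableSet_Iic,
    Measure.map_apply (hXm.neg : Measurable fun ω => -X ω) measurableSet_Iic] at h0
  have h1 : μ {ω | X ω ≤ -x} = μ {ω | -X ω ≤ -x} := by
    rw [Measure.map_apply (f := fun ω => -X ω) hXm.neg measurableSet_Iic] at h0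
    exact h0
  have h2 : {ω | -X ω ≤ -x} = {ω | X ω < x}ᶜ := by
    ext ω
    simp [not_lt]
  have hms : MeasurableSet {ω | X ω < x} := hXm measurableSet_Iio
  rw [h1, h2, measure_compl hms (measure_ne_top _ _), measure_univ,
    ENNReal.toReal_sub_of_le prob_le_one ENNReal.one_ne_top, ENNReal.toReal_one]

end helper

section quant

variable {Ω : Type*} [MeasurableSpace Ω] (μ : Measure Ω) [IsProbabilityMeasure μ]
  (X : Ω → ℝ)

lemma setA_nonempty {r : ℝ} (hr : r < 1) :
    {x : ℝ | r < (μ {ω | X ω ≤ x}).toReal}.Nonempty :=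
  exists_cdf_gt μ X hr

lemma setA_bddBelow (hXm : Measurable X) {r : ℝ} (hr : 0 < r) :
    BddBelow {x : ℝ | r < (μ {ω | X ω ≤ x}).toReal} := by
  obtain ⟨b, hb⟩ := exists_cdf_lt μ X hXm hr
  refine ⟨b, fun x hx => le_of_not_gt fun h => ?_⟩
  have : (μ {ω | X ω ≤ x}).toReal ≤ (μ {ω | X ω ≤ b}).toReal := cdf_mono μ X h.le
  have hx' : r < (μ {ω | X ω ≤ x}).toReal := hx
  linarith

lemma setB_nonempty {r : ℝ} (hr : r < 1) :
    {x : ℝ | r ≤ (μ {ω | X ω ≤ x}).toReal}.Nonempty := by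
  obtain ⟨x, hx⟩ := exists_cdf_gt μ X hr
  exact ⟨x, hx.le⟩

lemma setB_bddBelow (hXm : Measurable X) {r : ℝ} (hr : 0 < r) :
    BddBelow {x : ℝ | r ≤ (μ {ω | X ω ≤ x}).toReal} := by
  obtain ⟨b, hb⟩ := exists_cdf_lt μ X hXm hr
  refine ⟨b, fun x hx => le_of_not_gt fun h => ?_⟩
  have : (μ {ω | X ω ≤ x}).toReal ≤ (μ {ω | X ω ≤ b}).toReal := cdf_mono μ X h.le
  have hx' : r ≤ (μ {ω | X ω ≤ x}).toReal := hx
  linarith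

lemma left_le_rightQuantile (hXm : Measurable X) {r : ℝ} (hr : r ∈ Ioo (0:ℝ) 1) :
    leftQuantile μ X r ≤ rightQuantile μ X r :=
  csInf_le_csInf (setB_bddBelow μ X hXm hr.1) (setA_nonempty μ X hr.2)
    (by
      intro x hx
      have h1 : r < (μ {ω | X ω ≤ x}).toReal := hx
      show r ≤ (μ {ω | X ω ≤ x}).toReal
      exact h1.le)

lemma right_le_leftQuantile (hXm : Measurable X) {s t : ℝ} (hs : 0 < s) (hst : s < t)
    (ht : t < 1) : rightQuantile μ X s ≤ leftQuantile μ X t :=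
  csInf_le_csInf (setA_bddBelow μ X hXm hs) (setB_nonempty μ X ht)
    (by
      intro x hx
      have h1 : t ≤ (μ {ω | X ω ≤ x}).toReal := hx
      show s < (μ {ω | X ω ≤ x}).toReal
      exact lt_of_lt_of_le hst h1)

lemma quantile_sym (hXm : Measurable X)
    (hsym : Measure.map X μ = Measure.map (fun ω => -X ω) μ)
    {r : ℝ} (hr : r ∈ Ioo (0:ℝ) 1) :
    rightQuantile μ X r = - leftQuantile μ X (1 - r) := by
  set A : Set ℝ := {x : ℝ | r < (μ {ω | X ω ≤ x}).toReal} with hA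
  set C : Set ℝ := {y : ℝ | (μ {ω | X ω < y}).toReal ≤ r} with hC
  have hAne : A.Nonempty := setA_nonempty μ X hr.2
  have hAbd : BddBelow A := setA_bddBelow μ X hXm hr.1
  have hCne : C.Nonempty := by
    obtain ⟨b, hb⟩ := exists_cdf_lt μ X hXm hr.1
    exact ⟨b, le_trans (cdfs_le μ X b) hb.le⟩
  have hCbd : BddAbove C := by
    obtain ⟨c, hc⟩ := exists_cdfs_gt μ X hr.2
    refine ⟨c, fun y hy => le_of_not_gt fun h => ?_⟩
    have : (μ {ω | X ω < c}).toReal ≤ (μ {ω | X ω < y}).toReal := cdfs_mono μ X h.le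
    have hy' : (μ {ω | X ω < y}).toReal ≤ r := hy
    linarith
  have hBC : {x : ℝ | 1 - r ≤ (μ {ω | X ω ≤ x}).toReal} = -C := by
    ext x
    have h := sym_cdf μ X hXm hsym (-x)
    rw [neg_neg] at h
    rw [Set.mem_neg]
    constructor
    · intro h'
      have h'' : 1 - r ≤ (μ {ω | X ω ≤ x}).toReal := h'
      show (μ {ω | X ω < -x}).toReal ≤ r
      linarith
    · intro h'
      have h'' : (μ {ω | X ω < -x}).toReal ≤ r := h'
      show 1 - r ≤ (μ {ω | X ω ≤ x}).toReal
      linarith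
  have key : sInf A = sSup C := by
    apply le_antisymm
    · by_contra hlt
      push_neg at hlt
      obtain ⟨z, hz1, hz2⟩ := exists_between hlt
      have hzA : z ∉ A := fun hz => absurd (csInf_le hAbd hz) (not_le.2 hz2)
      have hzr : (μ {ω | X ω ≤ z}).toReal ≤ r := not_lt.1 hzA
      have hzC : z ∈ C := le_trans (cdfs_le μ X z) hzr
      exact absurd (le_csSup hCbd hzC) (not_le.2 hz1)
    · refine csSup_le hCne fun y hy => le_csInf hAne fun x hx => ?_
      by_contra h
      push_neg at h
      have h1 : (μ {ω | X ω ≤ x}).toReal ≤ (μ {ω | X ω < y}).toReal := cdf_lt_mono μ X h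
      have hx' : r < (μ {ω | X ω ≤ x}).toReal := hx
      have hy' : (μ {ω | X ω < y}).toReal ≤ r := hy
      linarith
  have hL : leftQuantile μ X (1 - r) = -sSup C := by
    rw [leftQuantile, hBC, Real.sInf_def, neg_neg]
  rw [rightQuantile, ← hA, key, hL, neg_neg]

end quant

section integ

variable {Ω : Type*} [MeasurableSpace Ω] (μ : Measure Ω) [IsProbabilityMeasure μ]
  (X : Ω → ℝ)

lemma countable_bad (hXm : Measurable X) :
    {s : ℝ | s ∈ Ioo (0:ℝ) 1 ∧ leftQuantile μ X s ≠ rightQuantile μ X s}.Countable := by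
  set D := {s : ℝ | s ∈ Ioo (0:ℝ) 1 ∧ leftQuantile μ X s ≠ rightQuantile μ X s} with hD
  have hlt : ∀ s ∈ D, leftQuantile μ X s < rightQuantile μ X s := fun s hs =>
    lt_of_le_of_ne (left_le_rightQuantile μ X hXm hs.1) hs.2
  have hq : ∀ s ∈ D, ∃ q : ℚ, leftQuantile μ X s < (q:ℝ) ∧ (q:ℝ) < rightQuantile μ X s :=
    fun s hs => exists_rat_btwn (hlt s hs)
  choose! f hf1 hf2 using hq
  have hsub : D ⊆ ⋃ q : ℚ, {s | s ∈ D ∧ f s = q} :=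
    fun s hs => mem_iUnion.2 ⟨f s, hs, rfl⟩
  refine Set.Countable.mono hsub (Set.countable_iUnion fun q => Set.Subsingleton.countable ?_)
  intro s hs t ht
  by_contra hne
  have key : ∀ a b : ℝ, a ∈ D → b ∈ D → a < b → (f a : ℝ) < (f b : ℝ) := by
    intro a b ha hb hab
    have h1 : rightQuantile μ X a ≤ leftQuantile μ X b :=
      right_le_leftQuantile μ X hXm ha.1.1 hab hb.1.2
    have e1 : (f a : ℝ) < rightQuantile μ X a := hf2 a ha
    have e2 : leftQuantile μ X b < (f b : ℝ) := hf1 b hb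
    linarith
  rcases lt_or_gt_of_ne hne with h | h
  · have := key s t hs.1 ht.1 h
    rw [hs.2, ht.2] at this
    exact lt_irrefl _ this
  · have := key t s ht.1 hs.1 h
    rw [hs.2, ht.2] at this
    exact lt_irrefl _ this

lemma integral_left_eq_right (hXm : Measurable X) {c : ℝ} (hc : c ∈ Ioo (0:ℝ) 1) :
    ∫ s in (0:ℝ)..c, leftQuantile μ X s = ∫ s in (0:ℝ)..c, rightQuantile μ X s := by
  refine intervalIntegral.integral_congr_ae ?_
  have hz : (volume : Measure ℝ) {s : ℝ | s ∈ Ioo (0:ℝ) 1 ∧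
      leftQuantile μ X s ≠ rightQuantile μ X s} = 0 :=
    (countable_bad μ X hXm).measure_zero _
  have hae : ∀ᵐ s : ℝ, s ∉ {s : ℝ | s ∈ Ioo (0:ℝ) 1 ∧
      leftQuantile μ X s ≠ rightQuantile μ X s} :=
    measure_eq_zero_iff_ae_notMem.mp hz
  filter_upwards [hae] with s hs hsI
  rw [uIoc_of_le hc.1.le] at hsI
  by_contra hne
  exact hs ⟨⟨hsI.1, lt_of_le_of_lt hsI.2 hc.2⟩, hne⟩

lemma integral_sym (hXm : Measurable X)
    (hsym : Measure.map X μ = Measure.map (fun ω => -X ω) μ)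
    {p : ℝ} (hp : p ∈ Ioo (1/2 : ℝ) 1) :
    ∫ r in p..1, rightQuantile μ X r = - ∫ s in (0:ℝ)..(1-p), rightQuantile μ X s := by
  have hp0 : 0 < p := lt_trans (by norm_num) hp.1
  have h1p : 1 - p ∈ Ioo (0:ℝ) 1 := ⟨by linarith [hp.2], by linarith [hp0]⟩
  have hsub := intervalIntegral.integral_comp_sub_left (a := (0:ℝ)) (b := 1-p)
    (fun x => rightQuantile μ X x) 1
  rw [show (1:ℝ) - (1 - p) = p by ring, sub_zero] at hsub
  have hcongr : ∫ x in (0:ℝ)..(1-p), rightQuantile μ X (1 - x)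
      = ∫ x in (0:ℝ)..(1-p), -leftQuantile μ X x := by
    refine intervalIntegral.integral_congr_ae (ae_of_all _ fun x hx => ?_)
    rw [uIoc_of_le h1p.1.le] at hx
    have hx1 : (1 - x) ∈ Ioo (0:ℝ) 1 := ⟨by linarith [hx.2, hp.2], by linarith [hx.1]⟩
    have := quantile_sym μ X hXm hsym hx1
    rw [show 1 - (1 - x) = x by ring] at this
    exact this
  rw [← hsub, hcongr, intervalIntegral.integral_neg,
    integral_left_eq_right μ X hXm h1p]

end integ

section expect

variable {Ω : Type*} [MeasurableSpace Ω] (μ : Measure Ω) [IsProbabilityMeasure μ]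
  (X : Ω → ℝ)

lemma expectile_sym (hXm : Measurable X) (hX : Integrable X μ)
    (hsym : Measure.map X μ = Measure.map (fun ω => -X ω) μ)
    {p : ℝ} (hp : p ∈ Ioo (1/2 : ℝ) 1) :
    expectile μ X (1 - p) = - expectile μ X p := by
  have h1p : (0:ℝ) < 1 - p := by linarith [hp.2]
  have h2p : (0:ℝ) ≤ 2 * p - 1 := by
    have := hp.1; linarith
  have h2p' : 2 * p - 1 ≤ 1 := by linarith [hp.2]
  set u : ℝ → ℝ := fun x => ∫ ω, max (X ω - x) 0 ∂μ with hu
  set v : ℝ → ℝ := fun x => ∫ ω, max (x - X ω) 0 ∂μ with hv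
  set m : ℝ := ∫ ω, X ω ∂μ with hm
  have intu : ∀ x : ℝ, Integrable (fun ω => max (X ω - x) 0) μ :=
    fun x => (hX.sub (integrable_const x)).pos_part
  have intv : ∀ x : ℝ, Integrable (fun ω => max (x - X ω) 0) μ :=
    fun x => ((integrable_const x).sub hX).pos_part
  have huv : ∀ x : ℝ, u x - v x = m - x := by
    intro x
    have hfun : (fun ω => max (X ω - x) 0 - max (x - X ω) 0) = fun ω => X ω - x := by
      funext ω
      rw [show x - X ω = -(X ω - x) by ring]
      exact max_zero_sub_max_neg_zero_eq_self _
    have e1 : u x - v x = ∫ ω, (max (X ω - x) 0 - max (x - X ω) 0) ∂μ :=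
      (integral_sub (intu x) (intv x)).symm
    rw [e1, hfun, integral_sub hX (integrable_const x), integral_const]
    simp [hm]
  have hvu : ∀ x : ℝ, v x = u x - (m - x) := fun x => by linarith [huv x]
  have hu_anti : ∀ x y : ℝ, x ≤ y → u y ≤ u x := by
    intro x y hxy
    exact integral_mono (intu y) (intu x) fun ω => max_le_max (by linarith) le_rfl
  have hu_nonneg : ∀ x : ℝ, 0 ≤ u x :=
    fun x => integral_nonneg fun ω => le_max_right _ _
  have husym : ∀ x : ℝ, u x = v (-x) := by
    intro x
    have hcont : Continuous fun y : ℝ => max (y - x) 0 :=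
      (continuous_id.sub continuous_const).max continuous_const
    have e1 : ∫ y, max (y - x) 0 ∂(Measure.map X μ) = u x :=
      integral_map hXm.aemeasurable hcont.aestronglyMeasurable
    have e2 : ∫ y, max (y - x) 0 ∂(Measure.map (fun ω => -X ω) μ)
        = ∫ ω, max (-X ω - x) 0 ∂μ :=
      integral_map hXm.neg.aemeasurable hcont.aestronglyMeasurable
    have e3 : (fun ω => max (-X ω - x) 0) = fun ω => max (-x - X ω) 0 := by
      funext ω; ring_nf
    rw [← e1, hsym, e2, e3]
  have hvsym : ∀ x : ℝ, v x = u (-x) := by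
    intro x
    have := husym (-x)
    rw [neg_neg] at this
    exact this.symm
  have hrep : ∀ x : ℝ, p * u x - (1 - p) * v x = (2*p - 1) * u x + (1 - p) * (m - x) := by
    intro x
    rw [hvu x]; ring
  have hstrict : ∀ x y : ℝ, x < y →
      p * u y - (1 - p) * v y < p * u x - (1 - p) * v x := by
    intro x y hxy
    have t1 : (2*p - 1) * u y ≤ (2*p - 1) * u x :=
      mul_le_mul_of_nonneg_left (hu_anti x y hxy.le) h2p
    have t2 : (1 - p) * (m - y) < (1 - p) * (m - x) :=
      mul_lt_mul_of_pos_left (by linarith) h1p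
    rw [hrep x, hrep y]
    linarith
  set E : Set ℝ := {x : ℝ | p * u x ≤ (1 - p) * v x} with hE
  set S : Set ℝ := {x : ℝ | (1 - p) * v x ≤ p * u x} with hS
  have hEne : E.Nonempty := by
    set x0 : ℝ := max 0 (m + u 0 / (1 - p)) with hx0
    have hx00 : (0:ℝ) ≤ x0 := le_max_left _ _
    have hx0m : m + u 0 / (1 - p) ≤ x0 := le_max_right _ _
    have h1 : u x0 ≤ u 0 := hu_anti 0 x0 hx00
    have h2a : u 0 / (1 - p) ≤ x0 - m := by linarith
    have h2b : (1 - p) * (u 0 / (1 - p)) ≤ (1 - p) * (x0 - m) :=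
      mul_le_mul_of_nonneg_left h2a h1p.le
    have h2c : (1 - p) * (u 0 / (1 - p)) = u 0 := by field_simp
    have t1 : (2*p - 1) * u x0 ≤ (2*p - 1) * u 0 := mul_le_mul_of_nonneg_left h1 h2p
    have t2 : (2*p - 1) * u 0 ≤ 1 * u 0 := mul_le_mul_of_nonneg_right h2p' (hu_nonneg 0)
    refine ⟨x0, ?_⟩
    show p * u x0 ≤ (1 - p) * v x0
    have := hrep x0
    nlinarith
  have hEbd : BddBelow E := by
    refine ⟨m, fun x hx => le_of_not_gt fun hlt => ?_⟩
    have hx' : p * u x ≤ (1 - p) * v x := hx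
    have t1 : 0 < (1 - p) * (m - x) := mul_pos h1p (by linarith)
    have t2 : 0 ≤ (2*p - 1) * u x := mul_nonneg h2p (hu_nonneg x)
    have := hrep x
    linarith
  have hSne : S.Nonempty := by
    refine ⟨m, ?_⟩
    show (1 - p) * v m ≤ p * u m
    have t2 : 0 ≤ (2*p - 1) * u m := mul_nonneg h2p (hu_nonneg m)
    have := hrep m
    linarith
  obtain ⟨x1, hx1⟩ := hEne
  have hx1' : p * u x1 ≤ (1 - p) * v x1 := hx1
  have hSbd : BddAbove S := by
    refine ⟨x1, fun y hy => le_of_not_gt fun hlt => ?_⟩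
    have hy' : (1 - p) * v y ≤ p * u y := hy
    have := hstrict x1 y hlt
    linarith
  have key : sSup S = sInf E := by
    apply le_antisymm
    · refine csSup_le hSne fun y hy => le_csInf ⟨x1, hx1⟩ fun x hx => ?_
      by_contra hc
      push_neg at hc
      have hy' : (1 - p) * v y ≤ p * u y := hy
      have hx' : p * u x ≤ (1 - p) * v x := hx
      have := hstrict x y hc
      linarith
    · by_contra hc
      push_neg at hc
      obtain ⟨z, hz1, hz2⟩ := exists_between hc
      have hzE : z ∉ E := fun hz => absurd (csInf_le hEbd hz) (not_le.2 hz2)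
      have hz' : (1 - p) * v z < p * u z := by
        by_contra hcc
        push_neg at hcc
        exact hzE hcc
      have hzS : z ∈ S := hz'.le
      exact absurd (le_csSup hSbd hzS) (not_le.2 hz1)
  have hEp : expectile μ X p = sInf E := rfl
  have hset : {x : ℝ | (1 - p) * u x ≤ (1 - (1 - p)) * v x} = -S := by
    ext x
    rw [Set.mem_neg]
    constructor
    · intro hx
      have hx' : (1 - p) * u x ≤ (1 - (1 - p)) * v x := hx
      show (1 - p) * v (-x) ≤ p * u (-x)
      rw [← husym x, ← hvsym x]
      linarith
    · intro hx
      have hx' : (1 - p) * v (-x) ≤ p * u (-x) := hx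
      rw [← husym x, ← hvsym x] at hx'
      show (1 - p) * u x ≤ (1 - (1 - p)) * v x
      linarith
  have hEq : expectile μ X (1 - p) = sInf (-S) := by
    rw [expectile, hset]
  rw [hEq, Real.sInf_def, neg_neg, key, hEp]
end expect

/-- If `X` is symmetrically distributed (`X =_d -X`) then, for `p ∈ (1/2,1)`,
`Δ^Q_p(X) = -2 Q^-_{1-p}(X)`, `Δ^ES_p(X) = -2 ES^-_{1-p}(X)` and
`Δ^ex_p(X) = 2 ex_p(X)`. -/
theorem symmetric_variability_identities {Ω : Type*} [MeasurableSpace Ω]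
    (μ : Measure Ω) [IsProbabilityMeasure μ] (X : Ω → ℝ) (hXm : Measurable X)
    (hX : Integrable X μ)
    (hsym : Measure.map X μ = Measure.map (fun ω => -X ω) μ)
    (p : ℝ) (hp : p ∈ Ioo (1/2 : ℝ) 1) :
    rightQuantile μ X p - leftQuantile μ X (1 - p) = -2 * leftQuantile μ X (1 - p) ∧
    es μ X p - esm μ X (1 - p) = -2 * esm μ X (1 - p) ∧
    expectile μ X p - expectile μ X (1 - p) = 2 * expectile μ X p := by
  have hp0 : (0:ℝ) < p := lt_trans (by norm_num) hp.1
  have h1 : rightQuantile μ X p = - leftQuantile μ X (1 - p) :=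
    quantile_sym μ X hXm hsym ⟨hp0, hp.2⟩
  have h2 : es μ X p = - esm μ X (1 - p) := by
    rw [es, esm, integral_sym μ X hXm hsym hp]
    ring
  have h3 : expectile μ X (1 - p) = - expectile μ X p :=
    expectile_sym μ X hXm hX hsym hp
  refine ⟨by rw [h1]; ring, by rw [h2]; ring, by rw [h3]; ring⟩
end

section
/- If X1 and X2 are integrable random variables with symmetric distributions and Δ^ex_p(X1) = Δ^ex_p(X2) for all p in (1/2,1), then X1 and X2 have the same distribution. -/
open MeasureTheory Set
open scoped ENNReal

section SL
variable {Ω : Type*} [MeasurableSpace Ω] (μ : Measure Ω) [IsProbabilityMeasure μ]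
  (X : Ω → ℝ)

/-- stop-loss transform -/
noncomputable def sl (x : ℝ) : ℝ := ∫ ω, max (X ω - x) 0 ∂μ

variable {μ X}

lemma sl_integrand_integrable (hX : Integrable X μ) (x : ℝ) :
    Integrable (fun ω => max (X ω - x) 0) μ :=
  (hX.sub (integrable_const x)).pos_part

lemma sl_nonneg (x : ℝ) : 0 ≤ sl μ X x :=
  integral_nonneg fun ω => le_max_right _ _

lemma sl_antitone (hX : Integrable X μ) : Antitone (sl μ X) := fun x y hxy =>
  integral_mono (sl_integrand_integrable hX y) (sl_integrand_integrable hX x)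
    (fun ω => max_le_max (by linarith) le_rfl)

lemma sl_lipschitz (hX : Integrable X μ) (x y : ℝ) :
    |sl μ X x - sl μ X y| ≤ |x - y| := by
  rw [sl, sl, ← integral_sub (sl_integrand_integrable hX x) (sl_integrand_integrable hX y)]
  calc |∫ ω, (max (X ω - x) 0 - max (X ω - y) 0) ∂μ|
      ≤ ∫ ω, |x - y| ∂μ := by
        refine (norm_integral_le_integral_norm (μ := μ) (fun ω => max (X ω - x) 0 - max (X ω - y) 0)).trans ?_
        refine integral_mono ((sl_integrand_integrable hX x).sub
          (sl_integrand_integrable hX y)).abs (integrable_const _) (fun ω => ?_)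
        have h1 := abs_max_sub_max_le_abs (X ω - x) (X ω - y) 0
        have h2 : X ω - x - (X ω - y) = y - x := by ring
        rw [h2, abs_sub_comm y x] at h1
        simpa [Real.norm_eq_abs] using h1
    _ = |x - y| := by simp

lemma sl_continuous (hX : Integrable X μ) : Continuous (sl μ X) := by
  have : LipschitzWith 1 (sl μ X) := by
    refine LipschitzWith.of_dist_le_mul fun x y => ?_
    simpa [Real.dist_eq, abs_sub_comm] using sl_lipschitz hX x y
  exact this.continuous

lemma neg_part_eq (hX : Integrable X μ) (x : ℝ) :
    ∫ ω, max (x - X ω) 0 ∂μ = sl μ X x + x - ∫ ω, X ω ∂μ := by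
  have : ∀ ω, max (x - X ω) 0 = max (X ω - x) 0 - (X ω - x) := by
    intro ω; rcases le_total (X ω) x with h | h <;> simp [max_eq_left, max_eq_right, *] <;> linarith
  have hsub : Integrable (fun ω => X ω - x) μ := hX.sub (integrable_const x)
  simp_rw [this]
  rw [integral_sub (sl_integrand_integrable hX x) hsub, integral_sub hX (integrable_const x)]
  simp [sl]; ring

end SL

section Sym
variable {Ω : Type*} [MeasurableSpace Ω] {μ : Measure Ω} [IsProbabilityMeasure μ]
  {X : Ω → ℝ}

lemma integral_comp_symm (hXm : Measurable X)
    (hsym : Measure.map X μ = Measure.map (fun ω => -X ω) μ)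
    {g : ℝ → ℝ} (hg : Continuous g) :
    ∫ ω, g (X ω) ∂μ = ∫ ω, g (-X ω) ∂μ := by
  rw [← integral_map hXm.aemeasurable (hg.aestronglyMeasurable), hsym,
    integral_map (φ := fun ω => -X ω) hXm.neg.aemeasurable (hg.aestronglyMeasurable)]

lemma integral_symm_zero (hXm : Measurable X)
    (hsym : Measure.map X μ = Measure.map (fun ω => -X ω) μ) :
    ∫ ω, X ω ∂μ = 0 := by
  have := integral_comp_symm hXm hsym (g := id) continuous_id
  simp only [id] at this
  rw [integral_neg] at this
  linarith

lemma sl_neg (hXm : Measurable X) (hX : Integrable X μ)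
    (hsym : Measure.map X μ = Measure.map (fun ω => -X ω) μ) (x : ℝ) :
    sl μ X (-x) = sl μ X x + x := by
  have hg : Continuous (fun t : ℝ => max (t + x) 0) :=
    (continuous_id.add continuous_const).max continuous_const
  have h1 : sl μ X (-x) = ∫ ω, max (x - X ω) 0 ∂μ := by
    rw [sl]
    simp_rw [sub_neg_eq_add]
    rw [integral_comp_symm hXm hsym hg]
    congr 1; funext ω; rw [neg_add_eq_sub]
  rw [h1, neg_part_eq hX, integral_symm_zero hXm hsym, sub_zero]

end Sym

section Exp
variable {Ω : Type*} [MeasurableSpace Ω] {μ : Measure Ω} [IsProbabilityMeasure μ]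
  {X : Ω → ℝ}

/-- Key characterization of expectiles of a symmetric integrable random variable. -/
lemma expectile_char (hXm : Measurable X) (hX : Integrable X μ)
    (hsym : Measure.map X μ = Measure.map (fun ω => -X ω) μ)
    {p : ℝ} (hp : p ∈ Ioo (1/2 : ℝ) 1) :
    (2*p - 1) * sl μ X (expectile μ X p) = (1 - p) * expectile μ X p ∧
    expectile μ X (1 - p) = - expectile μ X p ∧
    (∀ y, (2*p - 1) * sl μ X y = (1 - p) * y → expectile μ X p = y) := by
  obtain ⟨hp1, hp2⟩ := hp
  have hEX : ∫ ω, X ω ∂μ = 0 := integral_symm_zero hXm hsym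
  have hrfl : ∀ x : ℝ, (∫ ω, max (X ω - x) 0 ∂μ) = sl μ X x := fun _ => rfl
  set H : ℝ → ℝ := fun x => (2*p - 1) * sl μ X x - (1 - p) * x with hH
  have hanti : StrictAnti H := by
    intro a b hab
    have h1 : sl μ X b ≤ sl μ X a := sl_antitone hX hab.le
    have : (2*p-1) * sl μ X b ≤ (2*p-1) * sl μ X a :=
      mul_le_mul_of_nonneg_left h1 (by linarith)
    simp only [hH]; nlinarith
  have hcont : Continuous H :=
    ((continuous_const.mul (sl_continuous hX)).sub (continuous_const.mul continuous_id))
  have hH0 : 0 ≤ H 0 := by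
    simp only [hH, mul_zero, sub_zero]
    exact mul_nonneg (by linarith) (sl_nonneg 0)
  obtain ⟨M, hMpos, hHM⟩ : ∃ M : ℝ, 0 < M ∧ H M ≤ 0 := by
    refine ⟨((2*p-1) * sl μ X 0) / (1-p) + 1, ?_, ?_⟩
    · have : 0 ≤ ((2*p-1) * sl μ X 0) / (1-p) :=
        div_nonneg (mul_nonneg (by linarith) (sl_nonneg 0)) (by linarith)
      linarith
    · have hMpos' : (0:ℝ) ≤ ((2*p-1) * sl μ X 0) / (1-p) + 1 := by
        have : 0 ≤ ((2*p-1) * sl μ X 0) / (1-p) :=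
          div_nonneg (mul_nonneg (by linarith) (sl_nonneg 0)) (by linarith)
        linarith
      have h1 : sl μ X (((2*p-1) * sl μ X 0) / (1-p) + 1) ≤ sl μ X 0 :=
        sl_antitone hX hMpos'
      have h2 : (2*p-1) * sl μ X (((2*p-1) * sl μ X 0) / (1-p) + 1)
          ≤ (2*p-1) * sl μ X 0 := mul_le_mul_of_nonneg_left h1 (by linarith)
      have h3 : (1-p) * (((2*p-1) * sl μ X 0) / (1-p)) = (2*p-1) * sl μ X 0 := by
        rw [mul_comm, div_mul_cancel₀ _ (by linarith : (1:ℝ)-p ≠ 0)]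
      simp only [hH]; nlinarith
  obtain ⟨e, -, hze⟩ : ∃ e ∈ Icc (0:ℝ) M, H e = 0 := by
    have h0 : (0:ℝ) ∈ Icc (H M) (H 0) := ⟨hHM, hH0⟩
    obtain ⟨e, he, hee⟩ := intermediate_value_Icc' hMpos.le hcont.continuousOn h0
    exact ⟨e, he, hee⟩
  have hneg : ∀ x : ℝ, ∫ ω, max (x - X ω) 0 ∂μ = sl μ X x + x := by
    intro x; rw [neg_part_eq hX, hEX, sub_zero]
  have hmem : ∀ x : ℝ,
      (p * ∫ ω, max (X ω - x) 0 ∂μ ≤ (1 - p) * ∫ ω, max (x - X ω) 0 ∂μ) ↔ H x ≤ 0 := by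
    intro x
    rw [hneg x, hrfl x]
    simp only [hH]
    constructor <;> intro hx <;> nlinarith [hx]
  have hset : {x : ℝ | p * ∫ ω, max (X ω - x) 0 ∂μ ≤ (1 - p) * ∫ ω, max (x - X ω) 0 ∂μ}
      = Ici e := by
    ext x
    rw [mem_setOf_eq, hmem x, mem_Ici, ← hze]
    exact hanti.le_iff_ge
  have hexp : expectile μ X p = e := by rw [expectile, hset, csInf_Ici]
  have hmem' : ∀ x : ℝ,
      ((1-p) * ∫ ω, max (X ω - x) 0 ∂μ ≤ (1 - (1-p)) * ∫ ω, max (x - X ω) 0 ∂μ)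
        ↔ 0 ≤ H (-x) := by
    intro x
    rw [hneg x, hrfl x]
    have hfx : sl μ X x = sl μ X (-x) - x := by
      have := sl_neg hXm hX hsym (-x)
      rw [neg_neg] at this; linarith
    rw [hfx]
    simp only [hH]
    constructor <;> intro hx <;> nlinarith [hx]
  have hset' : {x : ℝ | (1-p) * ∫ ω, max (X ω - x) 0 ∂μ
        ≤ (1 - (1-p)) * ∫ ω, max (x - X ω) 0 ∂μ} = Ici (-e) := by
    ext x
    rw [mem_setOf_eq, hmem' x, mem_Ici, ← hze]
    rw [hanti.le_iff_ge]
    constructor <;> intro <;> linarith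
  have hexp' : expectile μ X (1-p) = -e := by rw [expectile, hset', csInf_Ici]
  refine ⟨?_, by rw [hexp, hexp'], ?_⟩
  · rw [hexp]; simp only [hH] at hze; linarith
  · intro y hy
    rw [hexp]
    have hzy : H y = 0 := by simp only [hH]; linarith
    exact hanti.injective (by rw [hze, hzy])

end Exp

section Meas
variable {Ω : Type*} [MeasurableSpace Ω] {μ : Measure Ω} [IsProbabilityMeasure μ]
  {X : Ω → ℝ}

lemma tail_measurable (ν : Measure ℝ) : Measurable (fun s : ℝ => ν (Ioi s)) :=
  Antitone.measurable (fun _ _ hab => measure_mono (Ioi_subset_Ioi hab))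

lemma lintegral_tail (hXm : Measurable X) (hX : Integrable X μ) (x : ℝ) :
    ∫⁻ s in Ioi x, (Measure.map X μ) (Ioi s) = ENNReal.ofReal (sl μ X x) := by
  set ν := Measure.map X μ with hν
  have h1 : ENNReal.ofReal (sl μ X x) = ∫⁻ ω, ENNReal.ofReal (max (X ω - x) 0) ∂μ :=
    ofReal_integral_eq_lintegral_ofReal (sl_integrand_integrable hX x)
      (ae_of_all _ fun ω => le_max_right _ _)
  have hlc : ∫⁻ ω, ENNReal.ofReal (max (X ω - x) 0) ∂μ
      = ∫⁻ t in Ioi 0, μ {a | t < max (X a - x) 0} :=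
    lintegral_eq_lintegral_meas_lt μ (f := fun ω => max (X ω - x) 0)
      (ae_of_all _ fun ω => le_max_right _ _) (sl_integrand_integrable hX x).aemeasurable
  rw [h1, hlc]
  have h2 : ∫⁻ t in Ioi 0, μ {a | t < max (X a - x) 0} = ∫⁻ t in Ioi 0, ν (Ioi (x + t)) := by
    refine setLIntegral_congr_fun measurableSet_Ioi (fun t ht => ?_)
    have hs : {a | t < max (X a - x) 0} = X ⁻¹' (Ioi (x + t)) := by
      ext a
      simp only [mem_setOf_eq, mem_preimage, mem_Ioi, lt_max_iff]
      constructor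
      · rintro (hh | hh)
        · linarith
        · exact absurd hh (not_lt.2 ht.le)
      · intro hh; left; linarith
    rw [hs, hν, Measure.map_apply hXm measurableSet_Ioi]
  rw [h2]
  have hg : Measurable fun s : ℝ => ν (Ioi s) := tail_measurable ν
  rw [← lintegral_indicator measurableSet_Ioi, ← lintegral_indicator measurableSet_Ioi]
  have h3 : ∀ t : ℝ, (Ioi (0:ℝ)).indicator (fun t => ν (Ioi (x + t))) t
      = (Ioi x).indicator (fun s => ν (Ioi s)) (x + t) := by
    intro t
    simp only [indicator_apply, mem_Ioi, lt_add_iff_pos_right]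
  simp_rw [h3]
  exact ((measurePreserving_add_left volume x).lintegral_comp
    (hg.indicator measurableSet_Ioi)).symm

lemma tail_rc (ν : Measure ℝ) [IsProbabilityMeasure ν] (t : ℝ) {c : ℝ} (hc : 0 < c) :
    ∃ δ > 0, (ν (Ioi t)).toReal - c ≤ (ν (Ioi (t + δ))).toReal := by
  have hmono : Monotone (fun n : ℕ => Ioi (t + 1/(n+1))) := by
    intro n m hnm
    refine Ioi_subset_Ioi (add_le_add_right ?_ t)
    apply one_div_le_one_div_of_le
    · positivity
    · exact_mod_cast add_le_add_left (Nat.cast_le.2 hnm) 1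
  have hU : (⋃ n : ℕ, Ioi (t + 1/(n+1))) = Ioi t := by
    ext s
    simp only [mem_iUnion, mem_Ioi]
    constructor
    · rintro ⟨n, hn⟩
      have : (0:ℝ) < 1/(n+1) := by positivity
      linarith
    · intro hs
      obtain ⟨n, hn⟩ := exists_nat_one_div_lt (show (0:ℝ) < s - t by linarith)
      exact ⟨n, by linarith⟩
  have htd := tendsto_measure_iUnion_atTop (μ := ν) hmono
  rw [hU] at htd
  have htd2 : Filter.Tendsto (fun n : ℕ => (ν (Ioi (t + 1/(n+1)))).toReal)
      Filter.atTop (nhds (ν (Ioi t)).toReal) :=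
    (ENNReal.tendsto_toReal (measure_ne_top ν _)).comp htd
  have hev : ∀ᶠ n : ℕ in Filter.atTop,
      (ν (Ioi t)).toReal - c < (ν (Ioi (t + 1/(n+1)))).toReal :=
    htd2.eventually (eventually_gt_nhds (by linarith))
  obtain ⟨n, hn⟩ := hev.exists
  exact ⟨1/(n+1), by positivity, hn.le⟩

lemma tail_G_integrableOn (ν : Measure ℝ) [IsProbabilityMeasure ν] (s : Set ℝ)
    (hs : MeasurableSet s) (hfin : volume s ≠ ⊤) :
    IntegrableOn (fun t => (ν (Ioi t)).toReal) s := by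
  haveI : Fact (volume s < ⊤) := ⟨hfin.lt_top⟩
  refine Integrable.mono' (integrable_const 1)
    ((tail_measurable ν).ennreal_toReal.aestronglyMeasurable) (ae_of_all _ fun t => ?_)
  rw [Real.norm_eq_abs, abs_of_nonneg ENNReal.toReal_nonneg]
  have h1 : ν (Ioi t) ≤ 1 := prob_le_one
  calc (ν (Ioi t)).toReal ≤ (1 : ℝ≥0∞).toReal :=
        ENNReal.toReal_mono (by simp) h1
    _ = 1 := by simp

lemma tail_le_of_integrals (ν₁ ν₂ : Measure ℝ) [IsProbabilityMeasure ν₁]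
    [IsProbabilityMeasure ν₂] (t : ℝ)
    (hint : ∀ x y : ℝ, x < y →
      ∫ s in Ioc x y, (ν₁ (Ioi s)).toReal = ∫ s in Ioc x y, (ν₂ (Ioi s)).toReal) :
    (ν₁ (Ioi t)).toReal ≤ (ν₂ (Ioi t)).toReal := by
  by_contra hlt
  push_neg at hlt
  set c : ℝ := (ν₁ (Ioi t)).toReal - (ν₂ (Ioi t)).toReal with hc
  have hcpos : 0 < c := by simp only [hc]; linarith
  obtain ⟨δ, hδ, hrc⟩ := tail_rc ν₁ t (half_pos hcpos)
  have hlb : ∀ s ∈ Ioc t (t + δ), (ν₂ (Ioi s)).toReal + c/2 ≤ (ν₁ (Ioi s)).toReal := by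
    intro s hs
    have h1 : (ν₁ (Ioi (t+δ))).toReal ≤ (ν₁ (Ioi s)).toReal :=
      ENNReal.toReal_mono (measure_ne_top _ _) (measure_mono (Ioi_subset_Ioi hs.2))
    have h2 : (ν₂ (Ioi s)).toReal ≤ (ν₂ (Ioi t)).toReal :=
      ENNReal.toReal_mono (measure_ne_top _ _) (measure_mono (Ioi_subset_Ioi hs.1.le))
    simp only [hc] at *
    linarith
  have hI := hint t (t+δ) (by linarith)
  have hint2' : IntegrableOn (fun s : ℝ => c/2) (Ioc t (t+δ)) := by
    refine integrableOn_const ?_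
    rw [Real.volume_Ioc]
    exact ENNReal.ofReal_ne_top
  have hintG2 : IntegrableOn (fun s => (ν₂ (Ioi s)).toReal) (Ioc t (t+δ)) :=
    tail_G_integrableOn ν₂ _ measurableSet_Ioc (by rw [Real.volume_Ioc]; simp)
  have hint2 : IntegrableOn (fun s => (ν₂ (Ioi s)).toReal + c/2) (Ioc t (t+δ)) :=
    hintG2.add hint2'
  have hint1 : IntegrableOn (fun s => (ν₁ (Ioi s)).toReal) (Ioc t (t+δ)) :=
    tail_G_integrableOn ν₁ _ measurableSet_Ioc (by rw [Real.volume_Ioc]; simp)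
  have hmono := setIntegral_mono_on hint2 hint1 measurableSet_Ioc hlb
  rw [integral_add hintG2 hint2', setIntegral_const, measureReal_def, Real.volume_Ioc] at hmono
  have hvol : ENNReal.toReal (ENNReal.ofReal (t + δ - t)) = δ := by
    rw [ENNReal.toReal_ofReal (by linarith)]; ring
  rw [hvol, smul_eq_mul, hI] at hmono
  nlinarith

/-- tail functions agree if their integrals over all bounded intervals agree -/
lemma tail_eq_of_integrals (ν₁ ν₂ : Measure ℝ) [IsProbabilityMeasure ν₁]
    [IsProbabilityMeasure ν₂]
    (hint : ∀ x y : ℝ, x < y →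
      ∫ s in Ioc x y, (ν₁ (Ioi s)).toReal = ∫ s in Ioc x y, (ν₂ (Ioi s)).toReal)
    (t : ℝ) : ν₁ (Ioi t) = ν₂ (Ioi t) := by
  have h1 := tail_le_of_integrals ν₁ ν₂ t hint
  have h2 := tail_le_of_integrals ν₂ ν₁ t (fun x y hxy => (hint x y hxy).symm)
  exact (ENNReal.toReal_eq_toReal_iff' (measure_ne_top _ _) (measure_ne_top _ _)).1
    (le_antisymm h1 h2)

lemma map_eq_of_sl_eq {X₁ X₂ : Ω → ℝ} (hX₁m : Measurable X₁) (hX₂m : Measurable X₂)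
    (hX₁ : Integrable X₁ μ) (hX₂ : Integrable X₂ μ)
    (hsl : ∀ x, sl μ X₁ x = sl μ X₂ x) :
    Measure.map X₁ μ = Measure.map X₂ μ := by
  set ν₁ := Measure.map X₁ μ with hν₁
  set ν₂ := Measure.map X₂ μ with hν₂
  haveI : IsProbabilityMeasure ν₁ := Measure.isProbabilityMeasure_map hX₁m.aemeasurable
  haveI : IsProbabilityMeasure ν₂ := Measure.isProbabilityMeasure_map hX₂m.aemeasurable
  -- lintegral tails agree
  have htails : ∀ x : ℝ, ∫⁻ s in Ioi x, ν₁ (Ioi s) = ∫⁻ s in Ioi x, ν₂ (Ioi s) := by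
    intro x
    rw [hν₁, hν₂, lintegral_tail hX₁m hX₁ x, lintegral_tail hX₂m hX₂ x, hsl x]
  have hfin : ∀ (ν : Measure ℝ) (X : Ω → ℝ), Measurable X → Integrable X μ →
      ν = Measure.map X μ → ∀ x : ℝ, (∫⁻ s in Ioi x, ν (Ioi s)) ≠ ⊤ := by
    intro ν X hXm hX hνX x
    rw [hνX, lintegral_tail hXm hX x]
    exact ENNReal.ofReal_ne_top
  -- lintegrals over Ioc agree
  have hIoc : ∀ x y : ℝ, x < y →
      ∫⁻ s in Ioc x y, ν₁ (Ioi s) = ∫⁻ s in Ioc x y, ν₂ (Ioi s) := by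
    intro x y hxy
    have hsplit : ∀ ν : Measure ℝ,
        (∫⁻ s in Ioc x y, ν (Ioi s)) + ∫⁻ s in Ioi y, ν (Ioi s)
          = ∫⁻ s in Ioi x, ν (Ioi s) := by
      intro ν
      rw [← lintegral_union measurableSet_Ioi Ioc_disjoint_Ioi_same,
        Ioc_union_Ioi_eq_Ioi hxy.le]
    have h1 := hsplit ν₁
    have h2 := hsplit ν₂
    rw [htails y] at h1
    rw [htails x, ← h2] at h1
    exact (ENNReal.add_left_inj (hfin ν₂ X₂ hX₂m hX₂ hν₂ y)).1 h1
  -- real versions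
  have hIocReal : ∀ x y : ℝ, x < y →
      ∫ s in Ioc x y, (ν₁ (Ioi s)).toReal = ∫ s in Ioc x y, (ν₂ (Ioi s)).toReal := by
    intro x y hxy
    have key : ∀ ν : Measure ℝ, IsProbabilityMeasure ν →
        ENNReal.ofReal (∫ s in Ioc x y, (ν (Ioi s)).toReal)
          = ∫⁻ s in Ioc x y, ν (Ioi s) := by
      intro ν hprob
      rw [ofReal_integral_eq_lintegral_ofReal
        (tail_G_integrableOn ν _ measurableSet_Ioc (by rw [Real.volume_Ioc]; simp))
        (ae_of_all _ fun s => ENNReal.toReal_nonneg)]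
      refine lintegral_congr fun s => ?_
      rw [ENNReal.ofReal_toReal (measure_ne_top _ _)]
    have h1 := key ν₁ ‹_›
    have h2 := key ν₂ ‹_›
    rw [hIoc x y hxy, ← h2] at h1
    refine (ENNReal.ofReal_eq_ofReal_iff ?_ ?_).1 h1 <;>
      exact setIntegral_nonneg measurableSet_Ioc fun s _ => ENNReal.toReal_nonneg
  have htail : ∀ t : ℝ, ν₁ (Ioi t) = ν₂ (Ioi t) := tail_eq_of_integrals ν₁ ν₂ hIocReal
  refine Measure.ext_of_Iic ν₁ ν₂ fun a => ?_
  have h1 : ∀ ν : Measure ℝ, IsProbabilityMeasure ν → ν (Iic a) = 1 - ν (Ioi a) := by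
    intro ν hprob
    rw [← compl_Ioi, measure_compl measurableSet_Ioi (measure_ne_top _ _), measure_univ]
  rw [h1 ν₁ ‹_›, h1 ν₂ ‹_›, htail a]

end Meas

/-- If `X₁, X₂` are integrable, symmetrically distributed, and have the same
inter-expectile difference `Δ^ex_p = ex_p - ex_{1-p}` for all `p ∈ (1/2,1)`,
then they have the same distribution. -/
theorem interExpectileDiff_determines_symmetric {Ω : Type*} [MeasurableSpace Ω]
    (μ : Measure Ω) [IsProbabilityMeasure μ]
    (X₁ X₂ : Ω → ℝ) (hX₁m : Measurable X₁) (hX₂m : Measurable X₂)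
    (hX₁ : Integrable X₁ μ) (hX₂ : Integrable X₂ μ)
    (hsym₁ : Measure.map X₁ μ = Measure.map (fun ω => -X₁ ω) μ)
    (hsym₂ : Measure.map X₂ μ = Measure.map (fun ω => -X₂ ω) μ)
    (h : ∀ p ∈ Ioo (1/2 : ℝ) 1,
      expectile μ X₁ p - expectile μ X₁ (1 - p)
        = expectile μ X₂ p - expectile μ X₂ (1 - p)) :
    Measure.map X₁ μ = Measure.map X₂ μ := by
  -- expectiles agree
  have hexp : ∀ p ∈ Ioo (1/2 : ℝ) 1, expectile μ X₁ p = expectile μ X₂ p := by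
    intro p hp
    have c₁ := (expectile_char hX₁m hX₁ hsym₁ hp).2.1
    have c₂ := (expectile_char hX₂m hX₂ hsym₂ hp).2.1
    have := h p hp
    rw [c₁, c₂] at this
    linarith
  -- stop-loss transforms agree on positive reals
  have hmain : ∀ (Y Z : Ω → ℝ), Measurable Y → Measurable Z → Integrable Y μ →
      Integrable Z μ → (Measure.map Y μ = Measure.map (fun ω => -Y ω) μ) →
      (Measure.map Z μ = Measure.map (fun ω => -Z ω) μ) →
      (∀ p ∈ Ioo (1/2 : ℝ) 1, expectile μ Y p = expectile μ Z p) →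
      ∀ x : ℝ, 0 < x → 0 < sl μ Y x → sl μ Y x = sl μ Z x := by
    intro Y Z hYm hZm hY hZ hsY hsZ hpe x hx hpos
    set p : ℝ := (x + sl μ Y x) / (x + 2 * sl μ Y x) with hpdef
    have hd : 0 < x + 2 * sl μ Y x := by linarith
    have hp : p ∈ Ioo (1/2 : ℝ) 1 := by
      constructor
      · rw [hpdef, lt_div_iff₀ hd]; linarith
      · rw [hpdef, div_lt_one hd]; linarith
    have hYx : (2*p - 1) * sl μ Y x = (1 - p) * x := by
      rw [hpdef]
      field_simp
      ring
    have heY : expectile μ Y p = x := (expectile_char hYm hY hsY hp).2.2 x hYx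
    have heZ : expectile μ Z p = x := by rw [← hpe p hp]; exact heY
    have hZeq := (expectile_char hZm hZ hsZ hp).1
    rw [heZ] at hZeq
    have h2p1 : (0:ℝ) < 2*p - 1 := by have := hp.1; linarith
    have : (2*p - 1) * sl μ Z x = (2*p - 1) * sl μ Y x := by rw [hZeq, hYx]
    exact (mul_left_cancel₀ (ne_of_gt h2p1) this).symm
  have hpos : ∀ x : ℝ, 0 < x → sl μ X₁ x = sl μ X₂ x := by
    intro x hx
    by_cases h1 : 0 < sl μ X₁ x
    · exact hmain X₁ X₂ hX₁m hX₂m hX₁ hX₂ hsym₁ hsym₂ hexp x hx h1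
    by_cases h2 : 0 < sl μ X₂ x
    · exact (hmain X₂ X₁ hX₂m hX₁m hX₂ hX₁ hsym₂ hsym₁
        (fun p hp => (hexp p hp).symm) x hx h2).symm
    · push_neg at h1 h2
      have := sl_nonneg (μ := μ) (X := X₁) x
      have := sl_nonneg (μ := μ) (X := X₂) x
      linarith
  -- extend to all reals
  have hall : ∀ x : ℝ, sl μ X₁ x = sl μ X₂ x := by
    have hIci : EqOn (sl μ X₁) (sl μ X₂) (Ici 0) := by
      have hIoi : EqOn (sl μ X₁) (sl μ X₂) (Ioi 0) := fun x hx => hpos x hx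
      have := hIoi.closure (sl_continuous hX₁) (sl_continuous hX₂)
      rwa [closure_Ioi] at this
    intro x
    rcases le_or_gt 0 x with hx | hx
    · exact hIci hx
    · have h1 := sl_neg hX₁m hX₁ hsym₁ (-x)
      have h2 := sl_neg hX₂m hX₂ hsym₂ (-x)
      rw [neg_neg] at h1 h2
      have h3 : sl μ X₁ (-x) = sl μ X₂ (-x) := hIci (by linarith : (0:ℝ) ≤ -x)
      linarith
  exact map_eq_of_sl_eq hX₁m hX₂m hX₁ hX₂ hall
end

section
/- If X1 and X2 are random variables with symmetric distributions and Δ^Q_p(X1) = Δ^Q_p(X2) (finite) for all p in (1/2,1), then X1 and X2 have the same distribution. -/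
open MeasureTheory Set

section Aux

open ProbabilityTheory Filter Topology

/-- left quantile of a measure on ℝ. -/
noncomputable def lqAux (ν : Measure ℝ) (p : ℝ) : ℝ := sInf {x | p ≤ cdf ν x}

/-- right quantile of a measure on ℝ. -/
noncomputable def rqAux (ν : Measure ℝ) (p : ℝ) : ℝ := sInf {x | p < cdf ν x}

/-- left-limit "cdf" `P(X < x)`. -/
noncomputable def GAux (ν : Measure ℝ) (x : ℝ) : ℝ := (ν (Iio x)).toReal

variable {ν : Measure ℝ} [IsProbabilityMeasure ν] {p x : ℝ}

lemma exists_lt_cdf (hp : p < 1) : ∃ x, p < cdf ν x :=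
  ((tendsto_cdf_atTop (μ := ν)).eventually (eventually_gt_nhds hp)).exists

lemma exists_cdf_lt_s18 (hp : 0 < p) : ∃ x, cdf ν x < p :=
  ((tendsto_cdf_atBot (μ := ν)).eventually (eventually_lt_nhds hp)).exists

lemma bddBelow_cdf_set (hp : 0 < p) : BddBelow {x | p ≤ cdf ν x} := by
  obtain ⟨y, hy⟩ := exists_cdf_lt_s18 (ν := ν) hp
  refine ⟨y, fun s hs => le_of_not_gt fun hc => ?_⟩
  exact absurd (hs.trans (monotone_cdf ν hc.le)) (not_le.2 hy)

lemma nonempty_cdf_set (hp : p < 1) : {x | p ≤ cdf ν x}.Nonempty := by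
  obtain ⟨y, hy⟩ := exists_lt_cdf (ν := ν) hp
  exact ⟨y, hy.le⟩

lemma le_cdf_lqAux (hp0 : 0 < p) (hp1 : p < 1) : p ≤ cdf ν (lqAux ν p) := by
  set a := lqAux ν p with ha
  have hforall : ∀ x ∈ Ioi a, p ≤ cdf ν x := by
    intro x hx
    obtain ⟨s, hs, hsx⟩ := (csInf_lt_iff (bddBelow_cdf_set hp0) (nonempty_cdf_set hp1)).1 hx
    exact hs.trans (monotone_cdf ν hsx.le)
  have hc : Tendsto (cdf ν) (𝓝[>] a) (𝓝 (cdf ν a)) :=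
    ((cdf ν).right_continuous a).mono_left (nhdsWithin_mono a Ioi_subset_Ici_self)
  exact ge_of_tendsto hc (eventually_nhdsWithin_of_forall hforall)

lemma lqAux_le_iff (hp0 : 0 < p) (hp1 : p < 1) : lqAux ν p ≤ x ↔ p ≤ cdf ν x := by
  constructor
  · intro hx
    exact (le_cdf_lqAux hp0 hp1).trans (monotone_cdf ν hx)
  · intro hx
    exact csInf_le (bddBelow_cdf_set hp0) hx

lemma GAux_le_cdf : GAux ν x ≤ cdf ν x := by
  rw [cdf_eq_real, measureReal_def, GAux]
  exact ENNReal.toReal_mono (measure_ne_top ν _) (measure_mono Iio_subset_Iic_self)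

lemma cdf_le_GAux {a t : ℝ} (h : a < t) : cdf ν a ≤ GAux ν t := by
  rw [cdf_eq_real, measureReal_def, GAux]
  exact ENNReal.toReal_mono (measure_ne_top ν _) (measure_mono fun y hy =>
    lt_of_le_of_lt (mem_Iic.1 hy) h)

lemma rqAux_eq_sSup (hp0 : 0 < p) (hp1 : p < 1) :
    rqAux ν p = sSup {x | GAux ν x ≤ p} := by
  set A := {x | p < cdf ν x} with hA
  set T := {x | GAux ν x ≤ p} with hT
  have hAne : A.Nonempty := exists_lt_cdf hp1
  have hTne : T.Nonempty := by
    obtain ⟨y, hy⟩ := exists_cdf_lt_s18 (ν := ν) hp0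
    exact ⟨y, le_of_lt (lt_of_le_of_lt GAux_le_cdf hy)⟩
  have hTA : ∀ t ∈ T, ∀ a ∈ A, t ≤ a := by
    intro t ht a haA
    have ht' : GAux ν t ≤ p := ht
    have haA' : p < cdf ν a := haA
    refine le_of_not_gt fun hc => ?_
    exact absurd (haA'.trans_le (cdf_le_GAux hc)) (not_lt.2 ht')
  have hTbdd : BddAbove T := ⟨hAne.choose, fun t ht => hTA t ht _ hAne.choose_spec⟩
  have hAbdd : BddBelow A := ⟨hTne.choose, fun a haA => hTA _ hTne.choose_spec a haA⟩
  have h1 : sSup T ≤ sInf A :=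
    csSup_le hTne fun t ht => le_csInf hAne fun a haA => hTA t ht a haA
  have h2 : sInf A ≤ sSup T := by
    by_contra hc
    push_neg at hc
    obtain ⟨t, ht1, ht2⟩ := exists_between hc
    have htT : t ∉ T := fun h => absurd (le_csSup hTbdd h) (not_le.2 ht1)
    have htA : t ∉ A := fun h => absurd (csInf_le hAbdd h) (not_le.2 ht2)
    simp only [hT, mem_setOf_eq, not_le] at htT
    simp only [hA, mem_setOf_eq, not_lt] at htA
    exact absurd (htT.trans_le (GAux_le_cdf.trans htA)) (lt_irrefl p)
  show sInf A = sSup T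
  exact le_antisymm h2 h1

lemma cdf_neg_add_GAux (hsym : ν.map (fun y => -y) = ν) (x : ℝ) :
    cdf ν (-x) + GAux ν x = 1 := by
  have h1 : ν (Iic (-x)) = ν (Ici x) := by
    conv_lhs => rw [← hsym]
    rw [Measure.map_apply measurable_neg measurableSet_Iic]
    congr 1
    ext y
    simp [neg_le_neg_iff, le_neg]
  have h2 : ν (Iio x) + ν (Ici x) = 1 := by
    rw [← measure_univ (μ := ν), ← Iio_union_Ici (a := x)]
    exact (measure_union (Iio_disjoint_Ici le_rfl) measurableSet_Ici).symm
  rw [cdf_eq_real, measureReal_def, GAux, h1]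
  have := congrArg ENNReal.toReal h2
  rw [ENNReal.toReal_add (measure_ne_top ν _) (measure_ne_top ν _), ENNReal.toReal_one] at this
  linarith

lemma rqAux_neg (hsym : ν.map (fun y => -y) = ν) (hp0 : 0 < p) (hp1 : p < 1) :
    rqAux ν p = - lqAux ν (1 - p) := by
  have hset : -{x | 1 - p ≤ cdf ν x} = {x | GAux ν x ≤ p} := by
    ext x
    simp only [Set.mem_neg, mem_setOf_eq]
    have := cdf_neg_add_GAux hsym x
    constructor <;> intro h <;> linarith
  rw [rqAux_eq_sSup hp0 hp1, lqAux, Real.sInf_def, hset, neg_neg]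

lemma rqAux_mono_of_lqAux (ν₁ ν₂ : Measure ℝ) [IsProbabilityMeasure ν₁]
    [IsProbabilityMeasure ν₂]
    (hlq : ∀ r ∈ Ioo (0:ℝ) (1/2), lqAux ν₂ r ≤ lqAux ν₁ r)
    {q : ℝ} (hq : q ∈ Ioo (0:ℝ) (1/2)) : rqAux ν₂ q ≤ rqAux ν₁ q := by
  obtain ⟨hq0, hq2⟩ := hq
  have hsub : {x | q < cdf ν₁ x} ⊆ {x | q < cdf ν₂ x} := by
    intro x hx
    simp only [mem_setOf_eq] at hx ⊢
    obtain ⟨r, hr1, hr2⟩ := exists_between (lt_min hx hq2)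
    have hr0 : 0 < r := hq0.trans hr1
    have hrhalf : r < 1/2 := hr2.trans_le (min_le_right _ _)
    have hr1' : r < 1 := hrhalf.trans (by norm_num)
    have hrc : r ≤ cdf ν₁ x := (hr2.trans_le (min_le_left _ _)).le
    have h1 : lqAux ν₁ r ≤ x := (lqAux_le_iff hr0 hr1').2 hrc
    have h2 : lqAux ν₂ r ≤ x := (hlq r ⟨hr0, hrhalf⟩).trans h1
    exact hr1.trans_le ((lqAux_le_iff hr0 hr1').1 h2)
  have hq1 : q < 1 := hq2.trans (by norm_num)
  have hbdd : BddBelow {x | q < cdf ν₂ x} := by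
    obtain ⟨y, hy⟩ := exists_cdf_lt_s18 (ν := ν₂) hq0
    refine ⟨y, fun s hs => ?_⟩
    have hs' : q < cdf ν₂ s := hs
    refine le_of_not_gt fun hc => ?_
    exact absurd (hs'.trans_le (monotone_cdf ν₂ hc.le)) (not_lt.2 hy.le)
  exact csInf_le_csInf hbdd (exists_lt_cdf hq1) hsub

lemma cdf_mono_of_lqAux (ν₁ ν₂ : Measure ℝ) [IsProbabilityMeasure ν₁]
    [IsProbabilityMeasure ν₂]
    (hlq : ∀ q ∈ Ioo (0:ℝ) 1, q ≠ 1/2 → lqAux ν₁ q ≤ lqAux ν₂ q)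
    (x : ℝ) : cdf ν₂ x ≤ cdf ν₁ x := by
  by_contra hc
  push_neg at hc
  obtain ⟨p₁, hp₁, hp₁'⟩ := exists_between hc
  obtain ⟨p₂, hp₂, hp₂'⟩ := exists_between hp₁'
  have key : ∀ q : ℝ, cdf ν₁ x < q → q < cdf ν₂ x → q ≠ 1/2 → False := by
    intro q h1 h2 hne
    have hq0 : 0 < q := (cdf_nonneg ν₁ x).trans_lt h1
    have hq1 : q < 1 := h2.trans_le (cdf_le_one ν₂ x)
    have hl2 : lqAux ν₂ q ≤ x := (lqAux_le_iff hq0 hq1).2 h2.le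
    have hl1 : lqAux ν₁ q ≤ x := (hlq q ⟨hq0, hq1⟩ hne).trans hl2
    exact absurd ((lqAux_le_iff hq0 hq1).1 hl1) (not_le.2 h1)
  rcases eq_or_ne p₁ (1/2 : ℝ) with heq | hne
  · exact key p₂ (hp₁.trans hp₂) hp₂' (by rw [← heq]; exact hp₂.ne')
  · exact key p₁ hp₁ (hp₂.trans hp₂') hne

end Aux

section Translate

open ProbabilityTheory

lemma leftQuantile_eq {Ω : Type*} [MeasurableSpace Ω] (μ : Measure Ω)
    [IsProbabilityMeasure μ] (X : Ω → ℝ) (hX : Measurable X) (p : ℝ) :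
    leftQuantile μ X p = lqAux (μ.map X) p := by
  haveI : IsProbabilityMeasure (μ.map X) := Measure.isProbabilityMeasure_map hX.aemeasurable
  unfold leftQuantile lqAux
  congr 1
  ext x
  simp only [mem_setOf_eq]
  rw [cdf_eq_real, measureReal_def, Measure.map_apply hX measurableSet_Iic]
  rfl

lemma rightQuantile_eq {Ω : Type*} [MeasurableSpace Ω] (μ : Measure Ω)
    [IsProbabilityMeasure μ] (X : Ω → ℝ) (hX : Measurable X) (p : ℝ) :
    rightQuantile μ X p = rqAux (μ.map X) p := by
  haveI : IsProbabilityMeasure (μ.map X) := Measure.isProbabilityMeasure_map hX.aemeasurable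
  unfold rightQuantile rqAux
  congr 1
  ext x
  simp only [mem_setOf_eq]
  rw [cdf_eq_real, measureReal_def, Measure.map_apply hX measurableSet_Iic]
  rfl

end Translate

open ProbabilityTheory in
/-- If `X₁, X₂` are symmetrically distributed and have the same inter-quantile
difference `Δ^Q_p = Q_p - Q^-_{1-p}` for all `p ∈ (1/2,1)`, then they have the
same distribution. -/
theorem interQuantileDiff_determines_symmetric {Ω : Type*} [MeasurableSpace Ω]
    (μ : Measure Ω) [IsProbabilityMeasure μ]
    (X₁ X₂ : Ω → ℝ) (hX₁m : Measurable X₁) (hX₂m : Measurable X₂)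
    (hsym₁ : Measure.map X₁ μ = Measure.map (fun ω => -X₁ ω) μ)
    (hsym₂ : Measure.map X₂ μ = Measure.map (fun ω => -X₂ ω) μ)
    (h : ∀ p ∈ Ioo (1/2 : ℝ) 1,
      rightQuantile μ X₁ p - leftQuantile μ X₁ (1 - p)
        = rightQuantile μ X₂ p - leftQuantile μ X₂ (1 - p)) :
    Measure.map X₁ μ = Measure.map X₂ μ := by
  set ν₁ := μ.map X₁ with hν₁
  set ν₂ := μ.map X₂ with hν₂
  haveI : IsProbabilityMeasure ν₁ := Measure.isProbabilityMeasure_map hX₁m.aemeasurable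
  haveI : IsProbabilityMeasure ν₂ := Measure.isProbabilityMeasure_map hX₂m.aemeasurable
  have hs₁ : ν₁.map (fun y => -y) = ν₁ := by
    rw [hν₁, Measure.map_map measurable_neg hX₁m]
    exact hsym₁.symm
  have hs₂ : ν₂.map (fun y => -y) = ν₂ := by
    rw [hν₂, Measure.map_map measurable_neg hX₂m]
    exact hsym₂.symm
  -- left quantiles agree on (0, 1/2)
  have hlq : ∀ q ∈ Ioo (0:ℝ) (1/2), lqAux ν₁ q = lqAux ν₂ q := by
    intro q ⟨hq0, hq2⟩
    have hp : (1 - q) ∈ Ioo (1/2 : ℝ) 1 := ⟨by linarith, by linarith⟩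
    have hp0 : (0:ℝ) < 1 - q := by linarith
    have hp1 : (1:ℝ) - q < 1 := by linarith
    have heq := h (1 - q) hp
    rw [rightQuantile_eq μ X₁ hX₁m, rightQuantile_eq μ X₂ hX₂m,
      leftQuantile_eq μ X₁ hX₁m, leftQuantile_eq μ X₂ hX₂m,
      rqAux_neg hs₁ hp0 hp1, rqAux_neg hs₂ hp0 hp1] at heq
    simp only [sub_sub_cancel] at heq
    linarith
  -- right quantiles agree on (0, 1/2)
  have hrq : ∀ q ∈ Ioo (0:ℝ) (1/2), rqAux ν₁ q = rqAux ν₂ q := by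
    intro q hq
    exact le_antisymm
      (rqAux_mono_of_lqAux ν₂ ν₁ (fun r hr => (hlq r hr).le) hq)
      (rqAux_mono_of_lqAux ν₁ ν₂ (fun r hr => (hlq r hr).ge) hq)
  -- left quantiles agree on (0,1) except possibly at 1/2
  have hlq' : ∀ q ∈ Ioo (0:ℝ) 1, q ≠ 1/2 → lqAux ν₁ q = lqAux ν₂ q := by
    intro q ⟨hq0, hq1⟩ hne
    rcases lt_or_gt_of_ne hne with hlt | hgt
    · exact hlq q ⟨hq0, hlt⟩
    · have hq' : (1 - q) ∈ Ioo (0:ℝ) (1/2) := ⟨by linarith, by linarith⟩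
      have h1 : rqAux ν₁ (1 - q) = - lqAux ν₁ q := by
        rw [rqAux_neg hs₁ (by linarith) (by linarith)]
        norm_num
      have h2 : rqAux ν₂ (1 - q) = - lqAux ν₂ q := by
        rw [rqAux_neg hs₂ (by linarith) (by linarith)]
        norm_num
      have := hrq (1 - q) hq'
      rw [h1, h2] at this
      linarith
  -- cdfs agree
  have hcdf : ∀ x, cdf ν₁ x = cdf ν₂ x := fun x =>
    le_antisymm
      (cdf_mono_of_lqAux ν₂ ν₁ (fun q hq hne => (hlq' q hq hne).ge) x)
      (cdf_mono_of_lqAux ν₁ ν₂ (fun q hq hne => (hlq' q hq hne).le) x)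
  -- conclude
  refine MeasureTheory.Measure.ext_of_Iic ν₁ ν₂ fun x => ?_
  rw [← ofReal_cdf (μ := ν₁) x, ← ofReal_cdf (μ := ν₂) x, hcdf x]
end

section
/- The Gini deviation admits the mixture representation Gini-D(X) = ∫_0^1 Δ^ES_p(X) (1−p) dp for every integrable random variable X, where Gini-D(X) = (1/2)·E|X1 − X2| with X1, X2 iid copies of X. -/
set_option linter.unusedSectionVars false
open MeasureTheory Set ProbabilityTheory Filter

/-- The Gini deviation `(1/2) E|X₁ - X₂|` for `X₁, X₂` iid copies of `X`,
computed from the law of `X`. -/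
noncomputable def giniDeviation {Ω : Type*} [MeasurableSpace Ω] (μ : Measure Ω)
    (X : Ω → ℝ) : ℝ :=
  (1/2) * ∫ x, ∫ y, |x - y| ∂(Measure.map X μ) ∂(Measure.map X μ)

noncomputable def rq (ν : Measure ℝ) (p : ℝ) : ℝ := sInf {x | p < cdf ν x}

variable {ν : Measure ℝ} [IsProbabilityMeasure ν] {p x : ℝ}

lemma rq_nonempty (hp1 : p < 1) : {x | p < cdf ν x}.Nonempty := by
  have := (tendsto_cdf_atTop ν).eventually (eventually_gt_nhds hp1)
  exact this.exists

lemma rq_bddBelow (hp0 : 0 < p) : BddBelow {x | p < cdf ν x} := by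
  have := (tendsto_cdf_atBot ν).eventually (eventually_lt_nhds hp0)
  obtain ⟨x0, hx0⟩ := this.exists
  refine ⟨x0, fun y hy => ?_⟩
  by_contra h
  push_neg at h
  exact absurd (lt_of_le_of_lt ((monotone_cdf ν) h.le) hx0) (not_lt.2 hy.le)

lemma rq_le (hp0 : 0 < p) (hpx : p < cdf ν x) : rq ν p ≤ x :=
  csInf_le (rq_bddBelow hp0) hpx

lemma le_cdf_of_rq_le (hp0 : 0 < p) (hp1 : p < 1) (h : rq ν p ≤ x) : p ≤ cdf ν x := by
  have key : ∀ y, x < y → p ≤ cdf ν y := by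
    intro y hy
    have : rq ν p < y := lt_of_le_of_lt h hy
    rw [rq, csInf_lt_iff (rq_bddBelow hp0) (rq_nonempty hp1)] at this
    obtain ⟨z, hz, hzy⟩ := this
    exact le_trans hz.le ((monotone_cdf ν) hzy.le)
  have hc : ContinuousWithinAt (cdf ν) (Ici x) x := (cdf ν).right_continuous x
  have hc2 : Tendsto (cdf ν) (nhdsWithin x (Ioi x)) (nhds (cdf ν x)) :=
    hc.tendsto.mono_left (nhdsWithin_mono x Ioi_subset_Ici_self)
  refine ge_of_tendsto hc2 ?_
  filter_upwards [self_mem_nhdsWithin] with y hy using key y hy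

lemma rq_monotoneOn : MonotoneOn (rq ν) (Ioo (0:ℝ) 1) := by
  intro a ha b hb hab
  exact le_csInf (rq_nonempty hb.2) fun x hx =>
    csInf_le (rq_bddBelow ha.1) (lt_of_le_of_lt hab hx)

lemma rq_aemeasurable : AEMeasurable (rq ν) (volume.restrict (Ioo (0:ℝ) 1)) :=
  aemeasurable_restrict_of_monotoneOn measurableSet_Ioo rq_monotoneOn

lemma rq_map_eq : Measure.map (rq ν) (volume.restrict (Ioo (0:ℝ) 1)) = ν := by
  have hae := rq_aemeasurable (ν := ν)
  have hfin : IsFiniteMeasure (Measure.map (rq ν) (volume.restrict (Ioo (0:ℝ) 1))) := by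
    constructor
    rw [Measure.map_apply_of_aemeasurable hae MeasurableSet.univ]
    simp [Real.volume_Ioo]
  refine Measure.ext_of_Iic _ _ (fun a => ?_)
  rw [Measure.map_apply_of_aemeasurable hae measurableSet_Iic]
  rw [Measure.restrict_apply' measurableSet_Ioo]
  have h1 : Ioo (0:ℝ) 1 ∩ Iio (cdf ν a) ⊆ rq ν ⁻¹' Iic a ∩ Ioo 0 1 := by
    rintro p ⟨hp, hpc⟩
    exact ⟨rq_le hp.1 hpc, hp⟩
  have h2 : rq ν ⁻¹' Iic a ∩ Ioo 0 1 ⊆ Ioo (0:ℝ) 1 ∩ Iic (cdf ν a) := by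
    rintro p ⟨hp, hpo⟩
    exact ⟨hpo, le_cdf_of_rq_le hpo.1 hpo.2 hp⟩
  have hc0 : (0:ℝ) ≤ cdf ν a := cdf_nonneg ν a
  have hc1 : cdf ν a ≤ 1 := cdf_le_one ν a
  have e1 : Ioo (0:ℝ) 1 ∩ Iio (cdf ν a) = Ioo 0 (cdf ν a) := by
    ext y; simp only [mem_inter_iff, mem_Ioo, mem_Iio]
    constructor
    · rintro ⟨⟨h1', _⟩, h3⟩; exact ⟨h1', h3⟩
    · rintro ⟨h1', h2'⟩; exact ⟨⟨h1', lt_of_lt_of_le h2' hc1⟩, h2'⟩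
  have lb : ENNReal.ofReal (cdf ν a) ≤ volume (rq ν ⁻¹' Iic a ∩ Ioo (0:ℝ) 1) := by
    calc ENNReal.ofReal (cdf ν a) = volume (Ioo (0:ℝ) (cdf ν a)) := by
          rw [Real.volume_Ioo, sub_zero]
      _ ≤ _ := by rw [← e1]; exact measure_mono h1
  have ub : volume (rq ν ⁻¹' Iic a ∩ Ioo (0:ℝ) 1) ≤ ENNReal.ofReal (cdf ν a) := by
    calc volume (rq ν ⁻¹' Iic a ∩ Ioo (0:ℝ) 1) ≤ volume (Ioo (0:ℝ) 1 ∩ Iic (cdf ν a)) :=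
          measure_mono h2
      _ ≤ volume (Ioc (0:ℝ) (cdf ν a)) := by
          refine measure_mono ?_
          rintro y ⟨hy1, hy2⟩; exact ⟨hy1.1, hy2⟩
      _ = ENNReal.ofReal (cdf ν a) := by rw [Real.volume_Ioc, sub_zero]
  have : volume (rq ν ⁻¹' Iic a ∩ Ioo (0:ℝ) 1) = ENNReal.ofReal (cdf ν a) :=
    le_antisymm ub lb
  rw [this, ofReal_cdf]

lemma integral_rq_comp {f : ℝ → ℝ} (hf : AEStronglyMeasurable f ν) :
    ∫ p in Ioo (0:ℝ) 1, f (rq ν p) = ∫ x, f x ∂ν := by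
  have h : AEStronglyMeasurable f (Measure.map (rq ν) (volume.restrict (Ioo (0:ℝ) 1))) := by
    rw [rq_map_eq]; exact hf
  rw [← MeasureTheory.integral_map rq_aemeasurable h, rq_map_eq]

lemma integrable_rq_comp {f : ℝ → ℝ} (hf : AEStronglyMeasurable f ν) (hfi : Integrable f ν) :
    Integrable (fun p => f (rq ν p)) (volume.restrict (Ioo (0:ℝ) 1)) := by
  have h : AEStronglyMeasurable f (Measure.map (rq ν) (volume.restrict (Ioo (0:ℝ) 1))) := by
    rw [rq_map_eq]; exact hf
  have := (integrable_map_measure h rq_aemeasurable).mp (by rwa [rq_map_eq])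
  exact this

lemma rq_integrable (hInt : Integrable (fun x => x : ℝ → ℝ) ν) :
    Integrable (rq ν) (volume.restrict (Ioo (0:ℝ) 1)) :=
  integrable_rq_comp (f := fun x => x) aestronglyMeasurable_id hInt

lemma rq_integrableOn_Icc (hInt : Integrable (fun x => x : ℝ → ℝ) ν) :
    IntegrableOn (rq ν) (Icc (0:ℝ) 1) volume := by
  have := rq_integrable (ν := ν) hInt
  rwa [IntegrableOn, ← Measure.restrict_congr_set Ioo_ae_eq_Icc]

section main
variable (hInt : Integrable (fun x => x : ℝ → ℝ) ν)
include hInt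

lemma rq_ii {a b : ℝ} (ha : a ∈ Icc (0:ℝ) 1) (hb : b ∈ Icc (0:ℝ) 1) :
    IntervalIntegrable (rq ν) volume a b := by
  apply IntegrableOn.intervalIntegrable
  exact (rq_integrableOn_Icc hInt).mono_set (uIcc_subset_Icc ha hb)

lemma H_continuousOn :
    ContinuousOn (fun t => ∫ v in (0:ℝ)..t, rq ν v) (Icc (0:ℝ) 1) := by
  have h := intervalIntegral.continuousOn_primitive_interval
    (f := rq ν) (μ := volume) (a := (0:ℝ)) (b := 1)
    (by rw [uIcc_of_le (by norm_num : (0:ℝ) ≤ 1)]; exact rq_integrableOn_Icc hInt)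
  rwa [uIcc_of_le (by norm_num : (0:ℝ) ≤ 1)] at h

lemma H_integrableOn :
    IntegrableOn (fun t => ∫ v in (0:ℝ)..t, rq ν v) (Ioo (0:ℝ) 1) volume :=
  ((H_continuousOn hInt).integrableOn_Icc).mono_set Ioo_subset_Icc_self

lemma inner_eq {u : ℝ} (hu : u ∈ Ioo (0:ℝ) 1) :
    ∫ v in Ioo (0:ℝ) 1, |rq ν u - rq ν v| =
      (2*u-1) * rq ν u + (∫ v in (0:ℝ)..1, rq ν v) - 2 * ∫ v in (0:ℝ)..u, rq ν v := by
  have hu0 : (0:ℝ) < u := hu.1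
  have hu1 : u < 1 := hu.2
  have hmemu : u ∈ Icc (0:ℝ) 1 := ⟨hu0.le, hu1.le⟩
  have hmem0 : (0:ℝ) ∈ Icc (0:ℝ) 1 := by norm_num
  have hmem1 : (1:ℝ) ∈ Icc (0:ℝ) 1 := by norm_num
  have habs : ∀ a b, a ∈ Icc (0:ℝ) 1 → b ∈ Icc (0:ℝ) 1 →
      IntervalIntegrable (fun v => |rq ν u - rq ν v|) volume a b := by
    intro a b ha hb
    exact ((intervalIntegrable_const).sub (rq_ii hInt ha hb)).abs
  have step0 : ∫ v in Ioo (0:ℝ) 1, |rq ν u - rq ν v| =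
      ∫ v in (0:ℝ)..1, |rq ν u - rq ν v| := by
    rw [intervalIntegral.integral_of_le (by norm_num : (0:ℝ) ≤ 1),
      ← Measure.restrict_congr_set Ioo_ae_eq_Ioc]
  have hsplit : (∫ v in (0:ℝ)..u, |rq ν u - rq ν v|) + (∫ v in u..1, |rq ν u - rq ν v|)
      = ∫ v in (0:ℝ)..1, |rq ν u - rq ν v| :=
    intervalIntegral.integral_add_adjacent_intervals (habs 0 u hmem0 hmemu)
      (habs u 1 hmemu hmem1)
  have part1 : ∫ v in (0:ℝ)..u, |rq ν u - rq ν v| = ∫ v in (0:ℝ)..u, (rq ν u - rq ν v) := by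
    apply intervalIntegral.integral_congr_ae
    refine Filter.Eventually.of_forall (fun v hv => ?_)
    rw [uIoc_of_le hu0.le] at hv
    have hvm : v ∈ Ioo (0:ℝ) 1 := ⟨hv.1, lt_of_le_of_lt hv.2 hu1⟩
    have := rq_monotoneOn (ν := ν) hvm hu (hv.2)
    exact abs_of_nonneg (sub_nonneg.2 this)
  have part2 : ∫ v in u..1, |rq ν u - rq ν v| = ∫ v in u..1, (rq ν v - rq ν u) := by
    apply intervalIntegral.integral_congr_ae
    have hne : ∀ᵐ (v : ℝ) ∂(volume : Measure ℝ), v ≠ 1 := by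
      rw [ae_iff]; simp [Real.volume_singleton]
    filter_upwards [hne] with v hvne hv
    rw [uIoc_of_le hu1.le] at hv
    have hvm : v ∈ Ioo (0:ℝ) 1 := ⟨lt_trans hu0 hv.1, lt_of_le_of_ne hv.2 hvne⟩
    have := rq_monotoneOn (ν := ν) hu hvm hv.1.le
    rw [abs_sub_comm]
    exact abs_of_nonneg (sub_nonneg.2 this)
  have part1' : ∫ v in (0:ℝ)..u, (rq ν u - rq ν v)
      = u * rq ν u - ∫ v in (0:ℝ)..u, rq ν v := by
    rw [intervalIntegral.integral_sub intervalIntegrable_const (rq_ii hInt hmem0 hmemu),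
      intervalIntegral.integral_const]
    simp [smul_eq_mul, mul_comm]
  have hadj : (∫ v in (0:ℝ)..u, rq ν v) + (∫ v in u..1, rq ν v) = ∫ v in (0:ℝ)..1, rq ν v :=
    intervalIntegral.integral_add_adjacent_intervals (rq_ii hInt hmem0 hmemu)
      (rq_ii hInt hmemu hmem1)
  have part2' : ∫ v in u..1, (rq ν v - rq ν u)
      = ((∫ v in (0:ℝ)..1, rq ν v) - ∫ v in (0:ℝ)..u, rq ν v) - (1-u) * rq ν u := by
    rw [intervalIntegral.integral_sub (rq_ii hInt hmemu hmem1) intervalIntegrable_const,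
      intervalIntegral.integral_const]
    rw [← hadj]
    simp only [smul_eq_mul]
    ring
  rw [step0, ← hsplit, part1, part2, part1', part2']
  ring

lemma lipf : LipschitzWith 1 (fun x => ∫ y, |x - y| ∂ν) := by
  refine LipschitzWith.of_dist_le_mul (fun x x' => ?_)
  simp only [Real.dist_eq, NNReal.coe_one, one_mul]
  have hix : Integrable (fun y => |x - y|) ν := ((integrable_const x).sub hInt).abs
  have hix' : Integrable (fun y => |x' - y|) ν := ((integrable_const x').sub hInt).abs
  calc |(∫ y, |x - y| ∂ν) - ∫ y, |x' - y| ∂ν| = |∫ y, (|x - y| - |x' - y|) ∂ν| := by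
        rw [integral_sub hix hix']
    _ ≤ ∫ y, ‖(|x - y| - |x' - y|)‖ ∂ν := by
        rw [← Real.norm_eq_abs]; exact norm_integral_le_integral_norm _
    _ ≤ ∫ _, |x - x'| ∂ν := by
        refine integral_mono (hix.sub hix').norm (integrable_const _) (fun y => ?_)
        simp only [Real.norm_eq_abs]
        calc |(|x - y|) - (|x' - y|)| ≤ |(x - y) - (x' - y)| := abs_abs_sub_abs_le_abs_sub _ _
          _ = |x - x'| := by ring_nf
    _ = |x - x'| := by simp

lemma gini_eq : ∫ x, ∫ y, |x - y| ∂ν ∂ν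
    = ∫ u in Ioo (0:ℝ) 1, ∫ v in Ioo (0:ℝ) 1, |rq ν u - rq ν v| := by
  rw [← integral_rq_comp (f := fun x => ∫ y, |x - y| ∂ν)
    (lipf hInt).continuous.measurable.aestronglyMeasurable]
  refine integral_congr_ae (Filter.Eventually.of_forall (fun u => ?_))
  exact (integral_rq_comp (f := fun y => |rq ν u - y|)
    (continuous_const.sub continuous_id).abs.measurable.aestronglyMeasurable).symm

lemma H_fubini :
    ∫ u in Ioo (0:ℝ) 1, (∫ v in (0:ℝ)..u, rq ν v)
      = ∫ v in Ioo (0:ℝ) 1, (1 - v) * rq ν v := by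
  obtain ⟨g0, hg0m, hg0e⟩ : ∃ g0 : ℝ → ℝ, Measurable g0 ∧
      rq ν =ᵐ[volume.restrict (Ioo (0:ℝ) 1)] g0 :=
    ⟨(rq_aemeasurable (ν := ν)).mk _, (rq_aemeasurable (ν := ν)).measurable_mk,
      (rq_aemeasurable (ν := ν)).ae_eq_mk⟩
  set m := volume.restrict (Ioo (0:ℝ) 1) with hm
  have hg0i : Integrable g0 m := (rq_integrable hInt).congr hg0e
  have hmIoi : ∀ v ∈ Ioo (0:ℝ) 1, (m (Ioi v)).toReal = 1 - v := by
    intro v hv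
    have : Ioo (0:ℝ) 1 ∩ Ioi v = Ioo v 1 := by
      ext y; simp only [mem_inter_iff, mem_Ioo, mem_Ioi]
      constructor
      · rintro ⟨⟨_, h2⟩, h3⟩; exact ⟨h3, h2⟩
      · rintro ⟨h1, h2⟩; exact ⟨⟨lt_trans hv.1 h1, h2⟩, h1⟩
    rw [hm, Measure.restrict_apply' measurableSet_Ioo, inter_comm, this, Real.volume_Ioo,
      ENNReal.toReal_ofReal (by linarith [hv.2])]
  set F : ℝ → ℝ → ℝ := fun u v => (Iio u).indicator g0 v with hF
  have hFu : ∀ u v, Function.uncurry F (u, v) = F u v := fun u v => rfl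
  have hFmeas : Measurable (Function.uncurry F) := by
    have : Function.uncurry F = fun p : ℝ × ℝ =>
        ({p : ℝ × ℝ | p.2 < p.1}).indicator (fun p => g0 p.2) p := by
      ext p
      simp only [Function.uncurry, hF, indicator, mem_Iio, mem_setOf_eq]
    rw [this]
    exact ((hg0m.comp measurable_snd).indicator (measurableSet_lt measurable_snd measurable_fst))
  have hslice : ∀ v, (fun u => F u v) = (Ioi v).indicator (fun _ => g0 v) := by
    intro v; ext u
    simp only [hF, indicator, mem_Iio, mem_Ioi]
  have hFint : Integrable (Function.uncurry F) (m.prod m) := by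
    rw [integrable_prod_iff' hFmeas.aestronglyMeasurable]
    constructor
    · refine Filter.Eventually.of_forall (fun v => ?_)
      simp only [hFu]
      rw [hslice v]
      exact (integrable_const _).indicator measurableSet_Ioi
    · have heq : (fun v => ∫ u, ‖Function.uncurry F (u, v)‖ ∂m)
          =ᵐ[m] (fun v => (1 - v) * ‖g0 v‖) := by
        filter_upwards [ae_restrict_mem measurableSet_Ioo] with v hv
        have hsl : (fun u => ‖F u v‖) = (Ioi v).indicator (fun _ => ‖g0 v‖) := by
          ext u
          simp only [hF, indicator, mem_Iio, mem_Ioi, apply_ite norm, norm_zero]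
        simp only [hFu]
        rw [hsl, integral_indicator measurableSet_Ioi, setIntegral_const, measureReal_def, hmIoi v hv,
          smul_eq_mul]
      have hInt2 : Integrable (fun v => (1 - v) * ‖g0 v‖) m := by
        refine Integrable.bdd_mul (c := 1) hg0i.norm
          ((continuous_const.sub continuous_id).measurable.aestronglyMeasurable) ?_
        filter_upwards [ae_restrict_mem measurableSet_Ioo] with v hv
        rw [Real.norm_eq_abs, abs_of_nonneg (by linarith [hv.2])]
        linarith [hv.1]
      exact hInt2.congr heq.symm
  -- rewrite the LHS integrand
  have hHe : (fun u => ∫ v in (0:ℝ)..u, rq ν v)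
      =ᵐ[m] (fun u => ∫ v, F u v ∂m) := by
    filter_upwards [ae_restrict_mem measurableSet_Ioo] with u hu
    have h1 : ∫ v in (0:ℝ)..u, rq ν v = ∫ v in Ioo (0:ℝ) u, rq ν v := by
      rw [intervalIntegral.integral_of_le hu.1.le,
        ← Measure.restrict_congr_set Ioo_ae_eq_Ioc]
    have h2 : Ioo (0:ℝ) 1 ∩ Iio u = Ioo 0 u := by
      ext y; simp only [mem_inter_iff, mem_Ioo, mem_Iio]
      constructor
      · rintro ⟨⟨hy1, _⟩, hy3⟩; exact ⟨hy1, hy3⟩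
      · rintro ⟨hy1, hy2⟩; exact ⟨⟨hy1, lt_trans hy2 hu.2⟩, hy2⟩
    have h3 : ∫ v, F u v ∂m = ∫ v in Ioo (0:ℝ) 1 ∩ Iio u, g0 v := by
      simp only [hF]
      rw [← setIntegral_indicator measurableSet_Iio]
    rw [h1, h3, h2]
    refine integral_congr_ae ?_
    have : ∀ᵐ v ∂(volume.restrict (Ioo (0:ℝ) u)), rq ν v = g0 v := by
      have hsub : Ioo (0:ℝ) u ⊆ Ioo (0:ℝ) 1 :=
        Ioo_subset_Ioo le_rfl hu.2.le
      exact ae_restrict_of_ae_restrict_of_subset hsub hg0e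
    exact this
  rw [integral_congr_ae hHe]
  have hswap := MeasureTheory.integral_integral_swap (f := F) (μ := m) (ν := m) hFint
  rw [hswap]
  -- compute inner integral after swap
  have hfin : (fun v => ∫ u, F u v ∂m) =ᵐ[m] (fun v => (1 - v) * rq ν v) := by
    filter_upwards [ae_restrict_mem measurableSet_Ioo, hg0e] with v hv hgv
    rw [hslice v, integral_indicator measurableSet_Ioi, setIntegral_const, measureReal_def, hmIoi v hv,
      smul_eq_mul, hgv]
  exact integral_congr_ae hfin

end main

lemma rightQuantile_eq_rq {Ω : Type*} [MeasurableSpace Ω] (μ : Measure Ω)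
    [IsProbabilityMeasure μ] {X : Ω → ℝ} (hXm : Measurable X) :
    rightQuantile μ X = rq (Measure.map X μ) := by
  have : IsProbabilityMeasure (Measure.map X μ) :=
    Measure.isProbabilityMeasure_map hXm.aemeasurable
  funext p
  unfold rightQuantile rq
  congr 1
  ext x
  have : μ {ω | X ω ≤ x} = (Measure.map X μ) (Iic x) := by
    rw [Measure.map_apply hXm measurableSet_Iic]; rfl
  simp only [mem_setOf_eq, this, ProbabilityTheory.cdf_eq_real, measureReal_def]

/-- The Gini deviation is the mixture `∫_0^1 Δ^ES_p(X) (1-p) dp` of inter-ES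
differences `Δ^ES_p(X) = ES_p(X) - ES^-_{1-p}(X)`. -/
theorem giniDeviation_eq_integral_interESDiff {Ω : Type*} [MeasurableSpace Ω]
    (μ : Measure Ω) [IsProbabilityMeasure μ] (X : Ω → ℝ) (hXm : Measurable X)
    (hX : Integrable X μ) :
    giniDeviation μ X = ∫ p in (0:ℝ)..1, (es μ X p - esm μ X (1 - p)) * (1 - p) := by
  set ν := Measure.map X μ with hν
  haveI hPM : IsProbabilityMeasure ν := Measure.isProbabilityMeasure_map hXm.aemeasurable
  have hrqf : rightQuantile μ X = rq ν := rightQuantile_eq_rq μ hXm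
  have hInt : Integrable (fun x => x : ℝ → ℝ) ν :=
    (integrable_map_measure aestronglyMeasurable_id hXm.aemeasurable).mpr hX
  set m := (volume : Measure ℝ).restrict (Ioo (0:ℝ) 1) with hm
  have hrqi : Integrable (rq ν) m := rq_integrable hInt
  have hHi : Integrable (fun t => ∫ v in (0:ℝ)..t, rq ν v) m := H_integrableOn hInt
  have hb2 : Integrable (fun u => u * rq ν u) m := by
    refine Integrable.bdd_mul (c := 1) hrqi
      (continuous_id.measurable.aestronglyMeasurable) ?_
    filter_upwards [ae_restrict_mem measurableSet_Ioo] with u hu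
    rw [Real.norm_eq_abs, abs_of_nonneg hu.1.le]
    exact hu.2.le
  have hb1 : Integrable (fun u => (2*u - 1) * rq ν u) m := by
    refine Integrable.bdd_mul (c := 1) hrqi
      ((continuous_const.mul continuous_id).sub continuous_const).measurable.aestronglyMeasurable ?_
    filter_upwards [ae_restrict_mem measurableSet_Ioo] with u hu
    rw [Real.norm_eq_abs, abs_le]
    constructor <;> [linarith [hu.1]; linarith [hu.2]]
  set A := ∫ v in (0:ℝ)..1, rq ν v with hA
  have hAA : ∫ v in Ioo (0:ℝ) 1, rq ν v = A := by
    rw [hA, intervalIntegral.integral_of_le zero_le_one,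
      ← Measure.restrict_congr_set Ioo_ae_eq_Ioc]
  set IH := ∫ u in Ioo (0:ℝ) 1, (∫ v in (0:ℝ)..u, rq ν v) with hIH
  have hfub : IH = ∫ v in Ioo (0:ℝ) 1, (1 - v) * rq ν v := H_fubini hInt
  have hvrq : ∫ v in Ioo (0:ℝ) 1, v * rq ν v = A - IH := by
    have hshape : (fun v => (1 - v) * rq ν v) = fun v => rq ν v - v * rq ν v := by
      funext v; ring
    have : IH = (∫ v in Ioo (0:ℝ) 1, rq ν v) - ∫ v in Ioo (0:ℝ) 1, v * rq ν v := by
      rw [hfub, hshape, integral_sub hrqi hb2]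
    rw [hAA] at this
    linarith
  have h2u1 : ∫ u in Ioo (0:ℝ) 1, (2*u - 1) * rq ν u = A - 2 * IH := by
    have hshape : (fun u => (2*u - 1) * rq ν u) = fun u => 2 * (u * rq ν u) - rq ν u := by
      funext u; ring
    have hc2 : Integrable (fun u => 2 * (u * rq ν u)) m := hb2.const_mul 2
    rw [hshape, integral_sub hc2 hrqi, integral_const_mul, hvrq, hAA]
    ring
  have hconstA : ∫ _ in Ioo (0:ℝ) 1, A = A := by
    rw [setIntegral_const, measureReal_def, Real.volume_Ioo]
    norm_num
  -- LHS
  have hLHS : giniDeviation μ X = A - 2 * IH := by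
    rw [giniDeviation, ← hν, gini_eq hInt]
    have hcg : ∫ u in Ioo (0:ℝ) 1, (∫ v in Ioo (0:ℝ) 1, |rq ν u - rq ν v|)
        = ∫ u in Ioo (0:ℝ) 1,
            ((2*u - 1) * rq ν u + A - 2 * ∫ v in (0:ℝ)..u, rq ν v) :=
      setIntegral_congr_fun measurableSet_Ioo (fun u hu => inner_eq hInt hu)
    rw [hcg]
    have hshape : (fun u => (2*u - 1) * rq ν u + A - 2 * ∫ v in (0:ℝ)..u, rq ν v)
        = fun u => ((2*u - 1) * rq ν u + A) - 2 * ∫ v in (0:ℝ)..u, rq ν v := by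
      funext u; ring
    have hfa : Integrable (fun u => (2*u - 1) * rq ν u + A) m := hb1.add (integrable_const A)
    have hfb : Integrable (fun u => 2 * ∫ v in (0:ℝ)..u, rq ν v) m := hHi.const_mul 2
    rw [hshape, integral_sub hfa hfb, integral_add hb1 (integrable_const A),
      integral_const_mul, h2u1, hconstA, ← hIH]
    ring
  -- RHS
  have hH1pInt : Integrable (fun p => ∫ v in (0:ℝ)..(1-p), rq ν v) m := by
    have hcont : ContinuousOn (fun p => ∫ v in (0:ℝ)..(1-p), rq ν v) (Icc (0:ℝ) 1) := by
      refine (H_continuousOn hInt).comp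
        ((continuous_const.sub continuous_id).continuousOn) ?_
      intro p hp
      exact ⟨by simp only [mem_Icc] at hp ⊢; linarith [hp.2],
        by simp only [mem_Icc] at hp ⊢; linarith [hp.1]⟩
    exact (hcont.integrableOn_Icc).mono_set Ioo_subset_Icc_self
  have hH1p : ∫ p in Ioo (0:ℝ) 1, (∫ v in (0:ℝ)..(1-p), rq ν v) = IH := by
    rw [Measure.restrict_congr_set Ioo_ae_eq_Ioc,
      ← intervalIntegral.integral_of_le zero_le_one,
      intervalIntegral.integral_comp_sub_left (fun t => ∫ v in (0:ℝ)..t, rq ν v) 1]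
    norm_num
    rw [hIH, intervalIntegral.integral_of_le zero_le_one,
      ← Measure.restrict_congr_set Ioo_ae_eq_Ioc]
  have hRHS : ∫ p in (0:ℝ)..1, (es μ X p - esm μ X (1 - p)) * (1 - p) = A - 2 * IH := by
    rw [intervalIntegral.integral_of_le zero_le_one,
      ← Measure.restrict_congr_set Ioo_ae_eq_Ioc]
    have hcongr : EqOn (fun p => (es μ X p - esm μ X (1 - p)) * (1 - p))
        (fun p => (A - ∫ v in (0:ℝ)..p, rq ν v) - ∫ v in (0:ℝ)..(1-p), rq ν v)
        (Ioo (0:ℝ) 1) := by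
      intro p hp
      have hp1 : (0:ℝ) < 1 - p := by linarith [hp.2]
      have hmem0 : (0:ℝ) ∈ Icc (0:ℝ) 1 := by norm_num
      have hmem1 : (1:ℝ) ∈ Icc (0:ℝ) 1 := by norm_num
      have hmemp : p ∈ Icc (0:ℝ) 1 := ⟨hp.1.le, hp.2.le⟩
      have hadj : (∫ v in (0:ℝ)..p, rq ν v) + (∫ v in p..1, rq ν v) = A :=
        intervalIntegral.integral_add_adjacent_intervals (rq_ii hInt hmem0 hmemp)
          (rq_ii hInt hmemp hmem1)
      have h2 : ∫ v in p..1, rq ν v = A - ∫ v in (0:ℝ)..p, rq ν v := by linarith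
      simp only [es, esm, hrqf, h2]
      field_simp
    rw [setIntegral_congr_fun measurableSet_Ioo hcongr]
    have hga : Integrable (fun p => A - ∫ v in (0:ℝ)..p, rq ν v) m :=
      (integrable_const A).sub hHi
    rw [integral_sub hga hH1pInt, integral_sub (integrable_const A) hHi, hconstA, ← hIH, hH1p]
    ring
  rw [hLHS, hRHS]
end
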